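/- arXiv:1911.03412 — 9 statements merged into one kernel-verified Lean document; each statement's English description precedes it below -/
import Mathlib

section
/- Let L/K be an unramified extension of non-archimedean local fields of degree n, and let s be an integer. A smooth character θ of L^× satisfies θ ∘ σ^s = θ (where σ is the Frobenius of L/K) if and only if θ factors through the norm map N_{L/K_g} where K_g is the intermediate field of degree g = gcd(n,s) over K. -/
section Extension

private lemma exists_zpow_eq_units (u : ℂˣ) {n : ℤ} (hn : n ≠ 0) : ∃ z : ℂˣ, z ^ n = u := by
  obtain ⟨w, hw⟩ := IsAlgClosed.exists_pow_nat_eq (u : ℂ) (n := n.natAbs)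
    (Int.natAbs_pos.2 hn)
  have hw0 : w ≠ 0 := by
    rintro rfl
    rw [zero_pow (Int.natAbs_ne_zero.2 hn)] at hw
    exact u.ne_zero hw.symm
  refine ⟨(Units.mk0 w hw0) ^ n.sign, ?_⟩
  have hsign : n.sign * n = (n.natAbs : ℤ) := by
    rcases lt_trichotomy n 0 with h | h | h
    · rw [Int.sign_eq_neg_one_of_neg h]; omega
    · exact absurd h hn
    · rw [Int.sign_eq_one_of_pos h]; omega
  rw [← zpow_mul, hsign, zpow_natCast]
  ext
  simpa using hw

noncomputable instance : DivisibleBy (Additive ℂˣ) ℤ where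
  div a n := if h : n = 0 then 0 else
    Additive.ofMul (Classical.choose (exists_zpow_eq_units a.toMul h))
  div_zero a := dif_pos rfl
  div_cancel {n} a hn := by
    show n • (if h : n = 0 then 0 else
        Additive.ofMul (Classical.choose (exists_zpow_eq_units a.toMul h))) = a
    rw [dif_neg hn, ← ofMul_zpow, Classical.choose_spec (exists_zpow_eq_units a.toMul hn)]
    rfl

private lemma extend_char {G : Type*} [CommGroup G] (S : Subgroup G) (f : S →* ℂˣ) :
    ∃ F : G →* ℂˣ, ∀ s : S, F s = f s := by
  obtain ⟨h, hh⟩ := (Module.Baer.of_divisible (A := Additive ℂˣ)).extension_property_addMonoidHom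
    (MonoidHom.toAdditive S.subtype) (fun a b hab => S.subtype_injective hab)
    (MonoidHom.toAdditive f)
  exact ⟨MonoidHom.toAdditive.symm h,
    fun s => congrArg Additive.toMul (DFunLike.congr_fun hh (Additive.ofMul s))⟩

end Extension

section Hilbert90

private lemma hilbert90_cyclic {F L : Type*} [Field F] [Field L] [Algebra F L]
    [FiniteDimensional F L] [IsGalois F L] (τ : L ≃ₐ[F] L)
    (hτ : ∀ φ : L ≃ₐ[F] L, φ ∈ Subgroup.zpowers τ) {x : L}
    (hx : Algebra.norm F x = 1) : ∃ y : L, y ≠ 0 ∧ x * τ y = y := by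
  classical
  set m := orderOf τ with hm
  have hmpos : 0 < m := orderOf_pos τ
  set a : ℕ → L := fun j => ∏ i ∈ Finset.range (j + 1), (τ ^ i) x with ha
  have ha_succ : ∀ j, a (j + 1) = τ (a j) * x := by
    intro j
    have h1 : a (j + 1) = (∏ i ∈ Finset.range (j + 1), (τ ^ (i + 1)) x) * (τ ^ 0) x :=
      Finset.prod_range_succ' _ _
    rw [h1, pow_zero, AlgEquiv.one_apply, ha]
    simp only [map_prod]
    congr 1
    exact Finset.prod_congr rfl fun i _ => by rw [pow_succ', AlgEquiv.mul_apply]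
  have hx0 : x ≠ 0 := by
    rintro rfl
    rw [Algebra.norm_zero] at hx
    exact zero_ne_one hx
  have ha0 : ∀ j, a j ≠ 0 := by
    intro j
    refine Finset.prod_ne_zero_iff.2 fun i _ => fun h => hx0 ?_
    exact (τ ^ i).injective (by rw [h, map_zero])
  have hbij : Function.Bijective (fun i : Fin m => τ ^ (i : ℕ)) := by
    constructor
    · intro i j hij
      exact Fin.ext (pow_injOn_Iio_orderOf i.isLt j.isLt hij)
    · intro φ
      obtain ⟨k, hk⟩ := hτ φ
      have hmz : (m : ℤ) ≠ 0 := by exact_mod_cast hmpos.ne'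
      have h1 : 0 ≤ k % (m : ℤ) := Int.emod_nonneg k hmz
      have h2 : k % (m : ℤ) < m := Int.emod_lt_of_pos k (by exact_mod_cast hmpos)
      refine ⟨⟨(k % (m : ℤ)).toNat, by omega⟩, ?_⟩
      show τ ^ ((k % (m : ℤ)).toNat) = φ
      rw [← zpow_natCast, Int.toNat_of_nonneg h1, hm, zpow_mod_orderOf]
      exact hk
  have hnorm : ∏ i ∈ Finset.range m, (τ ^ i) x = 1 := by
    calc ∏ i ∈ Finset.range m, (τ ^ i) x
        = ∏ i : Fin m, (τ ^ (i : ℕ)) x := (Fin.prod_univ_eq_prod_range _ m).symm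
      _ = ∏ φ : L ≃ₐ[F] L, φ x := Fintype.prod_bijective _ hbij _ _ (fun i => rfl)
      _ = algebraMap F L (Algebra.norm F x) := (Algebra.norm_eq_prod_automorphisms F x).symm
      _ = 1 := by rw [hx, map_one]
  have ha_last : a (m - 1) = 1 := by
    have h1 : m - 1 + 1 = m := Nat.succ_pred_eq_of_pos hmpos
    have h2 := hnorm
    rw [← h1] at h2
    exact h2
  have ham : a m = a 0 := by
    have h1 := ha_succ (m - 1)
    have h2 : a (m - 1 + 1) = a 0 := by
      rw [h1, ha_last, map_one, one_mul, ha]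
      simp
    rwa [Nat.sub_add_cancel hmpos] at h2
  -- linear independence of the characters τ^i, i < m
  have hLI : LinearIndependent L (fun i : Fin m => ((τ ^ (i : ℕ) : L ≃ₐ[F] L) : L →* L) : Fin m → (L → L)) := by
    refine (linearIndependent_monoidHom L L).comp
      (fun i : Fin m => ((τ ^ (i : ℕ) : L ≃ₐ[F] L) : L →* L)) ?_
    intro i j hij
    refine Fin.ext (pow_injOn_Iio_orderOf i.isLt j.isLt ?_)
    ext z
    exact DFunLike.congr_fun hij z
  obtain ⟨z, hz⟩ : ∃ z : L, ∑ i ∈ Finset.range m, a i * (τ ^ i) z ≠ 0 := by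
    by_contra hcontra
    push_neg at hcontra
    have h0 := linearIndependent_iff'.1 hLI Finset.univ (fun i : Fin m => a (i : ℕ)) ?_
      ⟨0, hmpos⟩ (Finset.mem_univ _)
    · exact ha0 0 h0
    · funext w
      have := hcontra w
      rw [← Fin.sum_univ_eq_sum_range (fun i => a i * (τ ^ i) w) m] at this
      simpa [Finset.sum_apply] using this
  refine ⟨∑ i ∈ Finset.range m, a i * (τ ^ i) z, hz, ?_⟩
  have hstep : x * τ (∑ i ∈ Finset.range m, a i * (τ ^ i) z)
      = ∑ i ∈ Finset.range m, a (i + 1) * (τ ^ (i + 1)) z := by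
    rw [map_sum, Finset.mul_sum]
    refine Finset.sum_congr rfl fun i _ => ?_
    rw [map_mul, ha_succ, pow_succ', AlgEquiv.mul_apply]
    ring
  rw [hstep]
  have hbm : a m * (τ ^ m) z = a 0 * (τ ^ 0) z := by
    rw [ham, hm, pow_orderOf_eq_one]
    simp
  have e1 : ∑ i ∈ Finset.range (m + 1), a i * (τ ^ i) z
      = (∑ i ∈ Finset.range m, a (i + 1) * (τ ^ (i + 1)) z) + a 0 * (τ ^ 0) z :=
    Finset.sum_range_succ' _ m
  have e2 : ∑ i ∈ Finset.range (m + 1), a i * (τ ^ i) z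
      = (∑ i ∈ Finset.range m, a i * (τ ^ i) z) + a m * (τ ^ m) z :=
    Finset.sum_range_succ _ m
  have e3 := e1.symm.trans e2
  rw [hbm] at e3
  exact add_right_cancel e3

end Hilbert90

section FactorIff

private lemma factor_iff (K L : Type*) [Field K] [Field L] [Algebra K L] [IsGalois K L]
    [FiniteDimensional K L] (τ : L ≃ₐ[K] L) (θ : Lˣ →* ℂˣ) :
    (∀ x : Lˣ, θ (Units.map ((τ : L ≃ₐ[K] L) : L →* L) x) = θ x) ↔
      ∃ χ : (↥(IntermediateField.fixedField (Subgroup.zpowers τ)))ˣ →* ℂˣ,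
        θ = χ.comp (Units.map (Algebra.norm
              (↥(IntermediateField.fixedField (Subgroup.zpowers τ))) : L →* _)) := by
  classical
  set Fi := IntermediateField.fixedField (Subgroup.zpowers τ) with hFi
  have hτmem : τ ∈ Fi.fixingSubgroup := by
    rw [hFi, IntermediateField.fixingSubgroup_fixedField]
    exact Subgroup.mem_zpowers τ
  set τ' : L ≃ₐ[Fi] L := IntermediateField.fixingSubgroupEquiv Fi ⟨τ, hτmem⟩ with hτ'
  have hτ'apply : ∀ z : L, τ' z = τ z := fun z => rfl
  have hτ'gen : ∀ φ : L ≃ₐ[Fi] L, φ ∈ Subgroup.zpowers τ' := by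
    intro φ
    obtain ⟨k, hk⟩ : (((IntermediateField.fixingSubgroupEquiv Fi).symm φ : Fi.fixingSubgroup) :
        L ≃ₐ[K] L) ∈ Subgroup.zpowers τ := by
      rw [← IntermediateField.fixingSubgroup_fixedField (Subgroup.zpowers τ)]
      exact ((IntermediateField.fixingSubgroupEquiv Fi).symm φ).2
    refine ⟨k, ?_⟩
    have h1 : (⟨τ, hτmem⟩ : Fi.fixingSubgroup) ^ k
        = (IntermediateField.fixingSubgroupEquiv Fi).symm φ :=
      Subtype.ext (by rw [SubgroupClass.coe_zpow]; exact hk)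
    have h2 : τ' ^ k = IntermediateField.fixingSubgroupEquiv Fi
        ((⟨τ, hτmem⟩ : Fi.fixingSubgroup) ^ k) :=
      (map_zpow (IntermediateField.fixingSubgroupEquiv Fi) _ k).symm
    show τ' ^ k = φ
    rw [h2, h1, MulEquiv.apply_symm_apply]
  constructor
  · intro hinv
    have key : ∀ u : Lˣ, Algebra.norm Fi (u : L) = 1 → θ u = 1 := by
      intro u hu
      obtain ⟨y, hy0, hxy⟩ := hilbert90_cyclic τ' hτ'gen hu
      set yu : Lˣ := Units.mk0 y hy0 with hyu
      have huy : u * Units.map ((τ : L ≃ₐ[K] L) : L →* L) yu = yu := by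
        ext
        simpa [hyu, ← hτ'apply y] using hxy
      have h2 := congrArg θ huy
      rw [map_mul, hinv yu] at h2
      exact mul_right_cancel (h2.trans (one_mul (θ yu)).symm)
    set N : Lˣ →* Fiˣ := Units.map (Algebra.norm Fi : L →* Fi) with hN
    have hker : ∀ u v : Lˣ, N u = N v → θ u = θ v := by
      intro u v huv
      have h1 : N (u * v⁻¹) = 1 := by rw [map_mul, map_inv, huv, mul_inv_cancel]
      have h2 : Algebra.norm Fi ((u * v⁻¹ : Lˣ) : L) = 1 := by
        have h3 := congrArg Units.val h1
        rw [hN] at h3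
        rwa [Units.coe_map, Units.val_one] at h3
      have h4 := key _ h2
      rw [map_mul, map_inv] at h4
      exact mul_inv_eq_one.mp h4
    have hmem : ∀ u : Lˣ, N u ∈ N.range := fun u => ⟨u, rfl⟩
    let χ₀ : N.range →* ℂˣ :=
    { toFun := fun v => θ (Classical.choose v.2)
      map_one' := by
        show θ (Classical.choose (1 : N.range).2) = 1
        have h1 : N (Classical.choose (1 : N.range).2) = N 1 := by
          rw [map_one]
          exact Classical.choose_spec (1 : N.range).2
        rw [hker _ 1 h1, map_one]
      map_mul' := by
        intro v w
        show θ (Classical.choose (v * w).2)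
          = θ (Classical.choose v.2) * θ (Classical.choose w.2)
        rw [← map_mul]
        refine hker _ _ ?_
        rw [map_mul, Classical.choose_spec v.2, Classical.choose_spec w.2,
          Classical.choose_spec (v * w).2]
        rfl }
    obtain ⟨χ, hχ⟩ := extend_char N.range χ₀
    refine ⟨χ, ?_⟩
    refine MonoidHom.ext fun x => ?_
    have h1 : χ (N x) = χ₀ ⟨N x, hmem x⟩ := hχ ⟨N x, hmem x⟩
    have h2 : χ₀ ⟨N x, hmem x⟩ = θ x :=
      hker _ _ (Classical.choose_spec (hmem x))
    show θ x = χ (N x)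
    rw [h1, h2]
  · rintro ⟨χ, rfl⟩ x
    have h1 : Algebra.norm Fi (τ ((x : Lˣ) : L)) = Algebra.norm Fi ((x : Lˣ) : L) := by
      rw [← hτ'apply]
      exact Algebra.norm_eq_of_algEquiv τ' _
    simp only [MonoidHom.comp_apply]
    congr 1
    ext
    simpa using h1

end FactorIff

/-- Let `L/K` be the unramified (hence cyclic Galois) extension of degree `n` of
non-archimedean local fields, with Galois group generated by the Frobenius `σ`, and
let `s` be an integer.  A character `θ` of `L^×` satisfies `θ ∘ σ^s = θ` if and only
if `θ` factors through the norm map `N_{L/K_g}` to the intermediate field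
`K_g = L^{⟨σ^g⟩}` of degree `g = gcd(n,s)` over `K`. -/
theorem character_sigma_invariant_iff_factors_through_norm
    (K L : Type*) [Field K] [Field L] [Algebra K L] [IsGalois K L]
    [FiniteDimensional K L]
    (n : ℕ) (hn : Module.finrank K L = n)
    (σ : L ≃ₐ[K] L) (hσ : ∀ g : L ≃ₐ[K] L, g ∈ Subgroup.zpowers σ)
    (s : ℤ) (θ : Lˣ →* ℂˣ) :
    (∀ x : Lˣ, θ (Units.map ((σ ^ s : L ≃ₐ[K] L) : L →* L) x) = θ x) ↔
      ∃ χ : (↥(IntermediateField.fixedField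
              (Subgroup.zpowers (σ ^ (Int.gcd n s : ℤ)))))ˣ →* ℂˣ,
        θ = χ.comp (Units.map (Algebra.norm
              (↥(IntermediateField.fixedField
                  (Subgroup.zpowers (σ ^ (Int.gcd n s : ℤ))))) : L →* _)) := by
  classical
  rw [← factor_iff K L (σ ^ (Int.gcd n s : ℤ)) θ]
  -- the subgroup of automorphisms fixing θ
  let S : Subgroup (L ≃ₐ[K] L) :=
  { carrier := {φ | ∀ x : Lˣ, θ (Units.map ((φ : L ≃ₐ[K] L) : L →* L) x) = θ x}
    one_mem' := by
      intro x
      have h1 : Units.map ((1 : L ≃ₐ[K] L) : L →* L) x = x := by ext; simp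
      rw [h1]
    mul_mem' := by
      intro φ ψ hφ hψ x
      have h1 : Units.map ((φ * ψ : L ≃ₐ[K] L) : L →* L) x
          = Units.map ((φ : L ≃ₐ[K] L) : L →* L) (Units.map ((ψ : L ≃ₐ[K] L) : L →* L) x) := by
        ext; simp [AlgEquiv.mul_apply]
      rw [h1, hφ, hψ]
    inv_mem' := by
      intro φ hφ x
      have h1 := hφ (Units.map ((φ⁻¹ : L ≃ₐ[K] L) : L →* L) x)
      have h2 : Units.map ((φ : L ≃ₐ[K] L) : L →* L)
          (Units.map ((φ⁻¹ : L ≃ₐ[K] L) : L →* L) x) = x := by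
        ext
        simp only [Units.coe_map, MonoidHom.coe_coe]
        rw [← AlgEquiv.mul_apply, mul_inv_cancel, AlgEquiv.one_apply]
      rw [h2] at h1
      exact h1.symm }
  have hσn : σ ^ (n : ℤ) = 1 := by
    rw [zpow_natCast, ← hn, ← IsGalois.card_aut_eq_finrank K L]
    exact pow_card_eq_one'
  have hgs : (σ ^ (Int.gcd n s : ℤ)) ∈ Subgroup.zpowers (σ ^ s) := by
    refine ⟨Int.gcdB n s, ?_⟩
    show (σ ^ s) ^ Int.gcdB n s = σ ^ (Int.gcd n s : ℤ)
    rw [← zpow_mul]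
    have hb : ((Int.gcd n s : ℕ) : ℤ) = n * Int.gcdA n s + s * Int.gcdB n s :=
      Int.gcd_eq_gcd_ab n s
    rw [show (Int.gcd n s : ℤ) = (n : ℤ) * Int.gcdA n s + s * Int.gcdB n s from hb,
      zpow_add, zpow_mul, zpow_mul, hσn, one_zpow, one_mul]
  have hsg : σ ^ s ∈ Subgroup.zpowers (σ ^ (Int.gcd n s : ℤ)) := by
    refine ⟨s / (Int.gcd n s : ℤ), ?_⟩
    show (σ ^ (Int.gcd n s : ℤ)) ^ (s / (Int.gcd n s : ℤ)) = σ ^ s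
    rw [← zpow_mul, Int.mul_ediv_cancel' (Int.gcd_dvd_right _ _)]
  constructor
  · intro h
    have hS : σ ^ s ∈ S := h
    exact (Subgroup.zpowers_le.mpr hS) hgs
  · intro h
    have hS : σ ^ (Int.gcd n s : ℤ) ∈ S := h
    exact (Subgroup.zpowers_le.mpr hS) hsg
end

section
/- Let f : X → Y be a morphism of perfect schemes over a perfect field k of characteristic p, with X separated. Then f is a monomorphism of fpqc sheaves on perfect k-algebras if and only if for every algebraically closed field extension K of k, the induced map X(K) → Y(K) is injective. -/
open AlgebraicGeometry CategoryTheory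

/-- A scheme over `𝔽_p` is perfect iff its absolute Frobenius is an isomorphism,
equivalently iff all its stalks are perfect rings. -/
def IsPerfectScheme (p : ℕ) (X : Scheme) : Prop :=
  ∀ pt : ↥X, CharP ↥(X.presheaf.stalk pt) p ∧
    Function.Bijective (fun a : ↥(X.presheaf.stalk pt) => a ^ p)

lemma isReduced_of_pow_injective {R : Type} [CommRing R] {p : ℕ} (hp : 1 < p)
    (h : Function.Injective (fun a : R => a ^ p)) : IsReduced R := by
  have key : ∀ m (a : R), a ^ (p ^ m) = 0 → a = 0 := by
    intro m
    induction m with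
    | zero => intro a ha; simpa using ha
    | succ n ih =>
      intro a ha
      have : (a ^ (p ^ n)) ^ p = (0 : R) ^ p := by
        rw [← pow_mul, ← pow_succ, zero_pow (by omega : p ≠ 0)]; exact ha
      exact ih a (h this)
  constructor
  rintro a ⟨n, hn⟩
  refine key n a ?_
  have hle : n ≤ p ^ n := (Nat.lt_pow_self (n := n) hp).le
  calc a ^ (p ^ n) = a ^ n * a ^ (p ^ n - n) := by rw [← pow_add, Nat.add_sub_cancel' hle]
  _ = 0 := by rw [hn, zero_mul]

/-- Lemma 2.2 of the paper.  Let `f : X → Y` be a morphism of perfect schemes over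
a perfect field `k` of characteristic `p`, with `X` separated.  Then `f` is a
monomorphism of fpqc (equivalently étale) sheaves on perfect `k`-algebras — i.e.
`X(R) → Y(R)` is injective for every perfect `k`-algebra `R` — if and only if
`X(K) → Y(K)` is injective for every algebraically closed field extension `K/k`. -/
theorem perfect_scheme_mono_iff_injective_on_alg_closed_points
    (p : ℕ) [Fact p.Prime] (k : Type) [Field k] [CharP k p] [PerfectRing k p]
    (X Y : Over (Spec (CommRingCat.of k)))
    (hX : IsPerfectScheme p X.left) (hY : IsPerfectScheme p Y.left)
    [X.left.IsSeparated]
    (f : X ⟶ Y) :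
    (∀ (R : Type) [CommRing R] [Algebra k R] [CharP R p],
        Function.Bijective (fun a : R => a ^ p) →
        Function.Injective
          (fun g : Over.mk (Spec.map (CommRingCat.ofHom (algebraMap k R))) ⟶ X =>
            g ≫ f)) ↔
    (∀ (K : Type) [Field K] [Algebra k K] [IsAlgClosed K],
        Function.Injective
          (fun g : Over.mk (Spec.map (CommRingCat.ofHom (algebraMap k K))) ⟶ X =>
            g ≫ f)) := by
  have hp1 : 1 < p := (Fact.out : p.Prime).one_lt
  constructor
  · -- easy direction: algebraically closed fields are perfect
    intro h K _ _ _
    haveI : CharP K p := charP_of_injective_algebraMap (algebraMap k K).injective p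
    refine h K ?_
    have hb := bijective_frobenius K p
    have : ⇑(frobenius K p) = fun a : K => a ^ p := funext fun a => frobenius_def p a
    rwa [this] at hb
  · -- hard direction
    intro h R _ _ _ hR g₁ g₂ hfg
    simp only at hfg
    haveI : IsReduced R := isReduced_of_pow_injective hp1 hR.1
    set a : Spec (CommRingCat.of R) ⟶ X.left := g₁.left with ha
    set b : Spec (CommRingCat.of R) ⟶ X.left := g₂.left with hb
    have hab : a ≫ f.left = b ≫ f.left := congrArg CommaMorphism.left hfg
    -- The equalizer of a and b is a closed immersion since X.left is separated
    have hsurj : Function.Surjective (Limits.equalizer.ι a b).base := by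
      intro x
      haveI := x.isPrime
      set Q := FractionRing (R ⧸ x.asIdeal) with hQ
      set K := AlgebraicClosure Q with hK
      set ψ : (R ⧸ x.asIdeal) →+* K :=
        (algebraMap Q K).comp (algebraMap (R ⧸ x.asIdeal) Q) with hψ
      have hψinj : Function.Injective ψ :=
        (algebraMap Q K).injective.comp (IsFractionRing.injective (R ⧸ x.asIdeal) Q)
      set φ : R →+* K := ψ.comp (Ideal.Quotient.mk x.asIdeal) with hφ
      letI : Algebra k K := (φ.comp (algebraMap k R)).toAlgebra
      set ι : Spec (CommRingCat.of K) ⟶ Spec (CommRingCat.of R) :=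
        Spec.map (CommRingCat.ofHom φ) with hι
      have hcomp : ι ≫ Spec.map (CommRingCat.ofHom (algebraMap k R)) =
          Spec.map (CommRingCat.ofHom (algebraMap k K)) := by
        rw [hι, ← Spec.map_comp]
        rfl
      have hwa : (ι ≫ a) ≫ X.hom = Spec.map (CommRingCat.ofHom (algebraMap k K)) := by
        rw [Category.assoc, ha, Over.w g₁]; exact hcomp
      have hwb : (ι ≫ b) ≫ X.hom = Spec.map (CommRingCat.ofHom (algebraMap k K)) := by
        rw [Category.assoc, hb, Over.w g₂]; exact hcomp
      set h₁ : Over.mk (Spec.map (CommRingCat.ofHom (algebraMap k K))) ⟶ X :=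
        Over.homMk (ι ≫ a) hwa with hh₁
      set h₂ : Over.mk (Spec.map (CommRingCat.ofHom (algebraMap k K))) ⟶ X :=
        Over.homMk (ι ≫ b) hwb with hh₂
      have heq : h₁ = h₂ := by
        apply h K
        simp only
        ext : 1
        simp only [Over.comp_left, hh₁, hh₂, Over.homMk_left, Category.assoc, hab]
      have hιab : ι ≫ a = ι ≫ b := by
        have := congrArg CommaMorphism.left heq
        simpa [hh₁, hh₂] using this
      set l : Spec (CommRingCat.of K) ⟶ Limits.equalizer a b :=
        Limits.equalizer.lift ι hιab with hl
      set pt : PrimeSpectrum K := ⟨⊥, Ideal.bot_prime⟩ with hpt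
      refine ⟨l.base pt, ?_⟩
      have hfac : l ≫ Limits.equalizer.ι a b = ι := Limits.equalizer.lift_ι ι hιab
      have : (Limits.equalizer.ι a b).base (l.base pt) = ι.base pt := by
        show (l ≫ Limits.equalizer.ι a b).base pt = ι.base pt
        rw [hfac]
      rw [this, hι]
      apply PrimeSpectrum.ext
      show Ideal.comap φ ⊥ = x.asIdeal
      have : Ideal.comap φ ⊥ = RingHom.ker φ := rfl
      rw [this, hφ, ← RingHom.comap_ker, (RingHom.injective_iff_ker_eq_bot ψ).mp hψinj]
      show Ideal.comap (Ideal.Quotient.mk x.asIdeal) ⊥ = x.asIdeal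
      have : Ideal.comap (Ideal.Quotient.mk x.asIdeal) ⊥ =
          RingHom.ker (Ideal.Quotient.mk x.asIdeal) := rfl
      rw [this, Ideal.mk_ker]
    haveI : Surjective (Limits.equalizer.ι a b) := ⟨hsurj⟩
    haveI : _root_.IsReduced ↥(CommRingCat.of R) := inferInstanceAs (_root_.IsReduced R)
    haveI := isIso_of_isClosedImmersion_of_surjective (Limits.equalizer.ι a b)
    have hab' : a = b := by
      rw [← cancel_epi (Limits.equalizer.ι a b)]
      exact Limits.equalizer.condition a b
    ext : 1
    exact hab'
end

section
/- Let X be a closed perfect subscheme of the perfection of affine m-space over a perfect field k of characteristic p. Then X is perfectly finitely presented over k; in fact X is the perfection of the finitely presented k-scheme Spec k[T₁,…,T_m]/(𝔞 ∩ k[T₁,…,T_m]), where 𝔞 is the ideal of X in k[T₁^{1/p^∞},…,T_m^{1/p^∞}]. -/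
/-- Lemma 2.1 of the paper, algebraically.  Let `A = k[T₁^{1/p^∞},…,T_m^{1/p^∞}]`
be the perfection of the polynomial ring over a perfect field `k` of characteristic
`p` (modelled as a perfect `k`-algebra `A` with algebraically independent elements
`T₁,…,T_m` such that every element of `A` has a `p`-power in `B := k[T₁,…,T_m]`),
and let `X = Spec A/𝔞` be a closed perfect subscheme of `Spec A`.  Then
`𝔞 ∩ B` is a finitely generated ideal of `B` — so `X₀ := Spec B/(𝔞 ∩ B)` is
finitely presented over `k` — and the induced map `B/(𝔞 ∩ B) → A/𝔞` exhibits
`A/𝔞` as the perfection of `B/(𝔞 ∩ B)`: it is injective and every element of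
`A/𝔞` has some `p^r`-th power in its image.  In particular `X` is perfectly
finitely presented over `k`. -/
theorem closed_perfect_subscheme_perfectly_finitely_presented
    (p : ℕ) [Fact p.Prime] (k : Type*) [Field k] [CharP k p] [PerfectRing k p]
    (m : ℕ) (A : Type*) [CommRing A] [Algebra k A] [CharP A p]
    (hAperf : Function.Bijective (fun a : A => a ^ p))
    (T : Fin m → A) (hind : AlgebraicIndependent k T)
    (hgen : ∀ a : A, ∃ r : ℕ, a ^ p ^ r ∈ Algebra.adjoin k (Set.range T))
    (I : Ideal A)
    (hXperf : Function.Bijective (fun a : A ⧸ I => a ^ p)) :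
    (I.comap ((Algebra.adjoin k (Set.range T)).val.toRingHom)).FG ∧
    Function.Injective
      (Ideal.quotientMap I ((Algebra.adjoin k (Set.range T)).val.toRingHom) le_rfl) ∧
    ∀ z : A ⧸ I, ∃ r : ℕ, z ^ p ^ r ∈
      Set.range (Ideal.quotientMap I
        ((Algebra.adjoin k (Set.range T)).val.toRingHom) le_rfl) := by
  set B := Algebra.adjoin k (Set.range T) with hBdef
  have hfg : B.FG := ⟨(Set.finite_range T).toFinset, by rw [Set.Finite.coe_toFinset]⟩
  have hft : Algebra.FiniteType k B := (Subalgebra.fg_iff_finiteType B).mp hfg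
  have hnoeth : IsNoetherianRing B := Algebra.FiniteType.isNoetherianRing k B
  refine ⟨(isNoetherianRing_iff_ideal_fg B).mp hnoeth _, Ideal.quotientMap_injective, ?_⟩
  intro z
  obtain ⟨a, rfl⟩ := Ideal.Quotient.mk_surjective z
  obtain ⟨r, hr⟩ := hgen a
  refine ⟨r, Ideal.Quotient.mk _ (⟨a ^ p ^ r, hr⟩ : B), ?_⟩
  rw [Ideal.quotientMap_mk]
  simp [← map_pow]
end

section
/- Suppose gcd(n,p) = 1. Let 1 ≤ m ≤ n−1 and g = gcd(n,m). Let L/K be the unramified extension of degree n of local fields with residue characteristic p, with Frobenius σ, and let K_g ⊆ L be the subfield of degree g over K. Let h ≥ 1 and consider α : {y ∈ U_L^1/U_L^h : N_{n/g}(y) ∈ U_K^1/U_K^h} → U_L^1/U_L^h, y ↦ σ^{n−m}(y)·y^{−1}. Then the image of α equals the kernel of the norm map N_{n/g} : U_L^1/U_L^h → U_{K_g}^1/U_{K_g}^h. -/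
section aux

variable {A : Type*} [CommGroup A]

lemma fix_inv (e : A ≃* A) (y : A) (h : e y = y) : e⁻¹ y = y := by
  conv_lhs => rw [← h]
  rw [← MulAut.mul_apply, inv_mul_cancel, MulAut.one_apply]

lemma fix_pow (e : A ≃* A) (y : A) (h : e y = y) : ∀ t : ℕ, (e ^ t) y = y := by
  intro t
  induction t with
  | zero => simp [MulAut.one_apply]
  | succ t ih => rw [pow_succ, MulAut.mul_apply, h, ih]

lemma fix_zpow (e : A ≃* A) (y : A) (h : e y = y) : ∀ b : ℤ, (e ^ b) y = y := by
  intro b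
  cases b with
  | ofNat t => rw [Int.ofNat_eq_coe, zpow_natCast]; exact fix_pow e y h t
  | negSucc t =>
      rw [zpow_negSucc]
      exact fix_inv _ _ (fix_pow e y h (t + 1))

end aux

/-- Abstract form of the image-of-`α` lemma for unit groups of unramified extensions.
`A` plays the role of `U_L^1/U_L^h` (a finite abelian `p`-group), `σ` is the
Frobenius of `L/K` (of order dividing `n`, acting on `A`), the `σ`-fixed points
correspond to `U_K^1/U_K^h`, and `Nm` is the norm `N_{n/g} = ∏_{i<n/g} σ^{gi}`
(surjective onto the `σ^g`-fixed points, as for the displayed quotients of unit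
groups).  Suppose `gcd(n,p) = 1`, `1 ≤ m ≤ n − 1`, and `g = gcd(n,m)`.  Then the
image of `α : y ↦ σ^{n−m}(y)·y⁻¹`, defined on `{y : Nm y is σ-fixed}`, is exactly
the kernel of `Nm`. -/
theorem image_alpha_eq_ker_norm
    (p n m : ℕ) (hp : p.Prime) (hpn : Nat.Coprime n p)
    (hm1 : 1 ≤ m) (hm2 : m ≤ n - 1) (hn : 2 ≤ n)
    (g : ℕ) (hg : g = Nat.gcd n m)
    (A : Type*) [CommGroup A] [Finite A]
    (hpgroup : ∀ a : A, ∃ k : ℕ, a ^ p ^ k = 1)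
    (σ : A ≃* A) (hσn : σ ^ n = 1)
    (Nm : A → A) (hNm : ∀ y : A, Nm y = ∏ i ∈ Finset.range (n / g), (σ ^ (g * i)) y)
    (hNmsurj : ∀ b : A, (σ ^ g) b = b → ∃ y : A, Nm y = b) :
    {z : A | ∃ y : A, σ (Nm y) = Nm y ∧ (σ ^ (n - m)) y * y⁻¹ = z} =
      {z : A | Nm z = 1} := by
  classical
  have hn0 : 0 < n := by omega
  have hgdvdn : g ∣ n := hg ▸ Nat.gcd_dvd_left n m
  have hgdvdm : g ∣ m := hg ▸ Nat.gcd_dvd_right n m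
  have hg0 : 0 < g := by
    rw [hg]; exact Nat.gcd_pos_of_pos_left m hn0
  set k := n / g with hk
  have hgk : g * k = n := Nat.mul_div_cancel' hgdvdn
  have hmn : m ≤ n := by omega
  have hgdvdnm : g ∣ n - m := Nat.dvd_sub hgdvdn hgdvdm
  have hkdvdn : k ∣ n := ⟨g, by rw [← hgk]; ring⟩
  -- N as monoid hom
  have hNmul : ∀ a b : A, Nm (a * b) = Nm a * Nm b := by
    intro a b
    simp [hNm, map_mul, Finset.prod_mul_distrib]
  set N : A →* A := MonoidHom.mk' Nm hNmul with hNdef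
  have hNapp : ∀ y, N y = Nm y := fun _ => rfl
  -- σ commutes with Nm
  have hpowcomm : ∀ (a : ℕ) (y : A), (σ ^ a) (σ y) = σ ((σ ^ a) y) := by
    intro a y
    rw [← MulAut.mul_apply, ← MulAut.mul_apply, ← pow_succ, ← pow_succ']
  have hcomm : ∀ y, Nm (σ y) = σ (Nm y) := by
    intro y
    rw [hNm, hNm, map_prod]
    exact Finset.prod_congr rfl fun i _ => hpowcomm _ y
  -- σ^g fixes Nm y
  have hfixg : ∀ y, (σ ^ g) (Nm y) = Nm y := by
    intro y
    rw [hNm, map_prod]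
    have h1 : ∀ i : ℕ, (σ ^ g) ((σ ^ (g * i)) y) = (σ ^ (g * (i + 1))) y := by
      intro i
      rw [← MulAut.mul_apply, ← pow_add]
      congr 2
      ring
    calc ∏ i ∈ Finset.range k, (σ ^ g) ((σ ^ (g * i)) y)
        = ∏ i ∈ Finset.range k, (σ ^ (g * (i + 1))) y :=
          Finset.prod_congr rfl fun i _ => h1 i
      _ = (∏ i ∈ Finset.range (k + 1), (σ ^ (g * i)) y) * ((σ ^ (g * 0)) y)⁻¹ := by
          rw [Finset.prod_range_succ']
          simp
      _ = ∏ i ∈ Finset.range k, (σ ^ (g * i)) y := by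
          rw [Finset.prod_range_succ]
          have : (σ ^ (g * k)) y = (σ ^ (g * 0)) y := by
            rw [hgk, hσn]; simp [MulAut.one_apply]
          rw [this]
          simp
  -- iterated fixing
  have hiter : ∀ (b : A) (j t : ℕ), (σ ^ j) b = b → (σ ^ (j * t)) b = b := by
    intro b j t hb
    have := fix_pow (σ ^ j) b hb t
    rwa [← pow_mul] at this
  -- σ^(n-m) fixes Nm y
  have hfixnm : ∀ y, (σ ^ (n - m)) (Nm y) = Nm y := by
    intro y
    obtain ⟨t, ht⟩ := hgdvdnm
    rw [ht]
    exact hiter _ g t (hfixg y)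
  -- the subgroup of σ-fixed points
  set F1 : Subgroup A :=
    { carrier := {y | σ y = y}
      one_mem' := map_one σ
      mul_mem' := by intro a b ha hb; simp only [Set.mem_setOf_eq, map_mul] at *; rw [ha, hb]
      inv_mem' := by intro a ha; simp only [Set.mem_setOf_eq, map_inv] at *; rw [ha] } with hF1def
  have hF1mem : ∀ y : A, y ∈ F1 ↔ σ y = y := fun _ => Iff.rfl
  set S : Subgroup A := F1.comap N with hSdef
  have hSmem : ∀ y : A, y ∈ S ↔ σ (Nm y) = Nm y := fun _ => Iff.rfl
  -- β
  set β : A →* A := MonoidHom.mk' (fun y => (σ ^ (n - m)) y * y⁻¹)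
    (by intro a b; simp only [map_mul, mul_inv]; exact mul_mul_mul_comm _ _ _ _) with hβdef
  -- easy direction: N (β y) = 1 for all y
  have heasy : ∀ y : A, Nm ((σ ^ (n - m)) y * y⁻¹) = 1 := by
    intro y
    have h1 : ∀ (a : ℕ) (y : A), Nm ((σ ^ a) y) = (σ ^ a) (Nm y) := by
      intro a
      induction a with
      | zero => intro y; simp [MulAut.one_apply]
      | succ a ih =>
          intro y
          rw [pow_succ, MulAut.mul_apply, ih, hcomm, MulAut.mul_apply]
    have h2 : Nm (y⁻¹) = (Nm y)⁻¹ := by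
      have := hNmul y y⁻¹
      simp only [mul_inv_cancel] at this
      have h0 : Nm (1 : A) = 1 := by simp [hNm]
      rw [h0] at this
      exact eq_inv_of_mul_eq_one_right this.symm
    rw [hNmul, h1, h2, hfixnm, mul_inv_cancel]
  -- key: if σ^(n-m) y = y and y ∈ S then σ y = y
  have hker : ∀ y : A, σ (Nm y) = Nm y → (σ ^ (n - m)) y = y → σ y = y := by
    intro y hyS hyfix
    -- first: σ^g y = y
    have hgcd : g = Nat.gcd n (n - m) := by
      apply Nat.dvd_antisymm
      · exact Nat.dvd_gcd hgdvdn hgdvdnm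
      · have h1 : Nat.gcd n (n - m) ∣ n := Nat.gcd_dvd_left _ _
        have h2 : Nat.gcd n (n - m) ∣ n - m := Nat.gcd_dvd_right _ _
        have h3 : Nat.gcd n (n - m) ∣ m := by
          have h4 := Nat.dvd_sub h1 h2
          have h5 : n - (n - m) = m := by omega
          rwa [h5] at h4
        rw [hg]
        exact Nat.dvd_gcd h1 h3
    have hbez : (g : ℤ) = n * Nat.gcdA n (n - m) + (n - m : ℕ) * Nat.gcdB n (n - m) := by
      rw [hgcd]
      exact Nat.gcd_eq_gcd_ab n (n - m)
    have hgy : (σ ^ g) y = y := by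
      have : (σ ^ (g : ℤ)) y = y := by
        rw [hbez, zpow_add, MulAut.mul_apply, zpow_mul, zpow_mul, zpow_natCast, zpow_natCast,
          hσn]
        rw [one_zpow, MulAut.one_apply]
        exact fix_zpow _ _ hyfix _
      rwa [zpow_natCast] at this
    -- then N y = y ^ k
    have hNy : Nm y = y ^ k := by
      rw [hNm]
      calc ∏ i ∈ Finset.range k, (σ ^ (g * i)) y = ∏ _i ∈ Finset.range k, y :=
            Finset.prod_congr rfl fun i _ => hiter y g i hgy
        _ = y ^ k := by rw [Finset.prod_const, Finset.card_range]
    -- σ(y^k) = y^k hence (σ y * y⁻¹)^k = 1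
    have hwk : (σ y * y⁻¹) ^ k = 1 := by
      have h1 : (σ y) ^ k = y ^ k := by
        rw [← map_pow, ← hNy]
        rw [hNy] at hyS
        rw [hNy]
        exact hyS
      rw [mul_pow, h1, inv_pow, mul_inv_cancel]
    obtain ⟨t, hwt⟩ := hpgroup (σ y * y⁻¹)
    have hco : Nat.Coprime k (p ^ t) :=
      ((Nat.Coprime.coprime_dvd_left hkdvdn hpn)).pow_right t
    have hord : orderOf (σ y * y⁻¹) ∣ 1 := by
      have h1 := orderOf_dvd_of_pow_eq_one hwk
      have h2 := orderOf_dvd_of_pow_eq_one hwt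
      have := Nat.dvd_gcd h1 h2
      rwa [Nat.Coprime.gcd_eq_one hco] at this
    have : σ y * y⁻¹ = 1 := by
      rw [Nat.dvd_one] at hord
      exact orderOf_eq_one_iff.mp hord
    exact mul_inv_eq_one.mp this
  -- restricted homs
  set β' : S →* A := β.comp S.subtype with hβ'def
  have hNmemF1 : ∀ y : S, N y.1 ∈ F1 := fun y => y.2
  set N' : S →* F1 := (N.comp S.subtype).codRestrict F1 hNmemF1 with hN'def
  have hN'surj : Function.Surjective N' := by
    rintro ⟨b, hb⟩
    have hbg : (σ ^ g) b = b := by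
      have := hiter b 1 g (by simpa [MulAut.one_apply] using (hF1mem _).mp hb)
      simpa using this
    obtain ⟨y, hy⟩ := hNmsurj b hbg
    have hyS : y ∈ S := by
      rw [hSmem, hy]
      exact hb
    exact ⟨⟨y, hyS⟩, Subtype.ext hy⟩
  -- kernels
  have hkerβ' : ∀ y : S, y ∈ β'.ker ↔ y.1 ∈ F1 := by
    intro y
    constructor
    · intro h
      have h1 : (σ ^ (n - m)) y.1 * (y.1)⁻¹ = 1 := h
      have h2 : (σ ^ (n - m)) y.1 = y.1 := mul_inv_eq_one.mp h1
      exact hker y.1 y.2 h2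
    · intro h
      have h2 : (σ ^ (n - m)) y.1 = y.1 := by
        have := hiter y.1 1 (n - m) (by simpa [MulAut.one_apply] using (hF1mem _).mp h)
        simpa using this
      show (σ ^ (n - m)) y.1 * (y.1)⁻¹ = 1
      rw [h2, mul_inv_cancel]
  have hF1S : ∀ b : A, b ∈ F1 → b ∈ S := by
    intro b hb
    rw [hSmem]
    have hbg : (σ ^ g) b = b := by
      have := hiter b 1 g (by simpa [MulAut.one_apply] using (hF1mem _).mp hb)
      simpa using this
    have hNb : Nm b = b ^ k := by
      rw [hNm]
      calc ∏ i ∈ Finset.range k, (σ ^ (g * i)) b = ∏ _i ∈ Finset.range k, b :=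
            Finset.prod_congr rfl fun i _ => hiter b g i hbg
        _ = b ^ k := by rw [Finset.prod_const, Finset.card_range]
    rw [hNb, map_pow, hb]
  -- equivs for cardinality
  have e1 : β'.ker ≃ F1 := by
    refine ⟨fun y => ⟨y.1.1, (hkerβ' y.1).mp y.2⟩, fun b => ⟨⟨b.1, hF1S b.1 b.2⟩,
      (hkerβ' _).mpr b.2⟩, ?_, ?_⟩
    · intro y; rfl
    · intro b; rfl
  have hkerN1S : ∀ z : A, Nm z = 1 → z ∈ S := by
    intro z hz
    rw [hSmem, hz]
    exact map_one σ
  have e2 : N'.ker ≃ N.ker := by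
    refine ⟨fun y => ⟨y.1.1, ?_⟩, fun z => ⟨⟨z.1, hkerN1S z.1 z.2⟩, ?_⟩, ?_, ?_⟩
    · have := y.2
      rw [MonoidHom.mem_ker] at this
      have : N y.1.1 = 1 := congrArg Subtype.val this
      exact this
    · rw [MonoidHom.mem_ker]
      exact Subtype.ext z.2
    · intro y; rfl
    · intro z; rfl
  -- counting
  have hc1 : Nat.card S = Nat.card β'.range * Nat.card β'.ker := by
    rw [Subgroup.card_eq_card_quotient_mul_card_subgroup β'.ker]
    congr 1
    exact Nat.card_congr (QuotientGroup.quotientKerEquivRange β').toEquiv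
  have hc2 : Nat.card S = Nat.card F1 * Nat.card N'.ker := by
    rw [Subgroup.card_eq_card_quotient_mul_card_subgroup N'.ker]
    congr 1
    exact Nat.card_congr (QuotientGroup.quotientKerEquivOfSurjective N' hN'surj).toEquiv
  have hF1pos : 0 < Nat.card F1 := Nat.card_pos
  have hcard : Nat.card β'.range = Nat.card N.ker := by
    have h1 : Nat.card β'.ker = Nat.card F1 := Nat.card_congr e1
    have h2 : Nat.card N'.ker = Nat.card N.ker := Nat.card_congr e2
    rw [h1] at hc1
    rw [h2] at hc2
    have := hc1.symm.trans hc2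
    exact Nat.eq_of_mul_eq_mul_right hF1pos (by rw [this, mul_comm])
  -- range β' ≤ ker N
  have hle : β'.range ≤ N.ker := by
    rintro z ⟨y, rfl⟩
    rw [MonoidHom.mem_ker]
    exact heasy y.1
  have hEq : β'.range = N.ker :=
    Subgroup.eq_of_le_of_card_ge hle (le_of_eq hcard.symm)
  -- conclude
  ext z
  simp only [Set.mem_setOf_eq]
  constructor
  · rintro ⟨y, hy1, hy2⟩
    have hz : z ∈ β'.range := ⟨⟨y, (hSmem y).mpr hy1⟩, hy2⟩
    rw [hEq, MonoidHom.mem_ker] at hz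
    exact hz
  · intro hz
    have hz' : z ∈ N.ker := hz
    rw [← hEq] at hz'
    obtain ⟨y, hy⟩ := hz'
    exact ⟨y.1, (hSmem y.1).mp y.2, hy⟩
end

section
/- Let p be a prime, q a power of p, and let a, b, c, d be positive integers with a, b < p and c < d. Write d = γc + r with 0 ≤ r < c. Then the plane curve over 𝔽_p defined by a·Tr_{c}(x) + b·Tr_{d}(x) = Tr_{d}(y^q − y) is 𝔽_p-isomorphic to the plane curve defined by b·Tr_{r}(x) + (a + bγ)·Tr_{c}(x) = Tr_{c}(y^q − y), where Tr_{s}(x) := Σ_{i=0}^{s−1} x^{q^i}. -/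
open MvPolynomial Finset

section Helpers
variable {p : ℕ} [Fact p.Prime] {e q : ℕ}

private lemma qpow_hom (hq : q = p ^ e) (m : ℕ) (u : MvPolynomial (Fin 2) (ZMod p)) :
    u ^ q ^ m = iterateFrobenius (MvPolynomial (Fin 2) (ZMod p)) p (e * m) u := by
  rw [iterateFrobenius_def, hq, ← pow_mul]

private lemma qpow_add (hq : q = p ^ e) (m : ℕ) (u v : MvPolynomial (Fin 2) (ZMod p)) :
    (u + v) ^ q ^ m = u ^ q ^ m + v ^ q ^ m := by
  simp only [qpow_hom hq, map_add]

private lemma qpow_sub (hq : q = p ^ e) (m : ℕ) (u v : MvPolynomial (Fin 2) (ZMod p)) :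
    (u - v) ^ q ^ m = u ^ q ^ m - v ^ q ^ m := by
  simp only [qpow_hom hq, map_sub]

private lemma qpow_sum (hq : q = p ^ e) (m : ℕ) {ι : Type*} (s : Finset ι)
    (f : ι → MvPolynomial (Fin 2) (ZMod p)) :
    (∑ i ∈ s, f i) ^ q ^ m = ∑ i ∈ s, f i ^ q ^ m := by
  simp only [qpow_hom hq, map_sum]

private lemma qpow_C (hq : q = p ^ e) (m : ℕ) (t : ZMod p) :
    (C t : MvPolynomial (Fin 2) (ZMod p)) ^ q ^ m = C t := by
  rw [← map_pow, hq, ← pow_mul, ZMod.pow_card_pow]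

private lemma trace_tel (hq : q = p ^ e) (s : ℕ) (t : MvPolynomial (Fin 2) (ZMod p)) :
    ∑ i ∈ range s, (t ^ q - t) ^ q ^ i = t ^ q ^ s - t := by
  have h : ∀ i, (t ^ q - t) ^ q ^ i = t ^ q ^ (i + 1) - t ^ q ^ i := by
    intro i
    rw [qpow_sub hq, ← pow_mul, ← pow_succ']
  simp_rw [h]
  rw [Finset.sum_range_sub (f := fun i => t ^ q ^ i), pow_zero, pow_one]

private lemma geom_tel (hq : q = p ^ e) (c n : ℕ) (u : MvPolynomial (Fin 2) (ZMod p)) :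
    (∑ k ∈ range n, u ^ (q ^ c) ^ k) ^ q ^ c - ∑ k ∈ range n, u ^ (q ^ c) ^ k
      = u ^ (q ^ c) ^ n - u := by
  rw [qpow_sum hq]
  have h : ∀ k, (u ^ (q ^ c) ^ k) ^ q ^ c = u ^ (q ^ c) ^ (k + 1) := fun k => by
    rw [← pow_mul, ← pow_succ]
  have h2 : ∑ k ∈ range n, (u ^ (q ^ c) ^ k) ^ q ^ c - ∑ k ∈ range n, u ^ (q ^ c) ^ k
      = ∑ k ∈ range n, (u ^ (q ^ c) ^ (k + 1) - u ^ (q ^ c) ^ k) := by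
    rw [Finset.sum_sub_distrib]; simp_rw [h]
  rw [h2, Finset.sum_range_sub (f := fun k => u ^ (q ^ c) ^ k), pow_zero, pow_one]

private lemma sum_mod_mul {M : Type*} [AddCommMonoid M] (g : ℕ → M) (c : ℕ) :
    ∀ n : ℕ, ∑ i ∈ range (n * c), g (i % c) = n • ∑ t ∈ range c, g t := by
  intro n
  induction n with
  | zero => simp
  | succ n ih =>
    rw [add_mul, one_mul, Finset.sum_range_add, ih, succ_nsmul]
    congr 1
    refine Finset.sum_congr rfl fun i hi => ?_
    rw [Nat.add_comm, Nat.add_mul_mod_self_right, Nat.mod_eq_of_lt (Finset.mem_range.mp hi)]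

private lemma sum_mod_split {M : Type*} [AddCommMonoid M] (g : ℕ → M) (c γ r : ℕ)
    (hr : r < c) :
    ∑ i ∈ range (γ * c + r), g (i % c)
      = γ • (∑ t ∈ range c, g t) + ∑ t ∈ range r, g t := by
  rw [Finset.sum_range_add, sum_mod_mul]
  congr 1
  refine Finset.sum_congr rfl fun i hi => ?_
  rw [Nat.add_comm, Nat.add_mul_mod_self_right,
    Nat.mod_eq_of_lt (lt_trans (Finset.mem_range.mp hi) hr)]

private lemma trace_shift (hq : q = p ^ e) (s : ℕ) (t : ZMod p) :
    ∑ i ∈ range s,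
        ((X 0 : MvPolynomial (Fin 2) (ZMod p)) + C t * ((X 1) ^ q - X 1)) ^ q ^ i
      = (∑ i ∈ range s, (X 0 : MvPolynomial (Fin 2) (ZMod p)) ^ q ^ i)
        + C t * ((X 1) ^ q ^ s - X 1) := by
  have h : ∀ i, ((X 0 : MvPolynomial (Fin 2) (ZMod p)) + C t * ((X 1) ^ q - X 1)) ^ q ^ i
      = (X 0 : MvPolynomial (Fin 2) (ZMod p)) ^ q ^ i + C t * ((X 1) ^ q - X 1) ^ q ^ i :=
    fun i => by rw [qpow_add hq, mul_pow, qpow_C hq]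
  simp_rw [h]
  rw [Finset.sum_add_distrib, ← Finset.mul_sum, trace_tel hq]

private lemma H_spec (hq : q = p ^ e) (c d γ r : ℕ) (hr : r < c) (hdiv : d = γ * c + r) :
    ∃ H : MvPolynomial (Fin 2) (ZMod p),
      (∀ v : Fin 2 → MvPolynomial (Fin 2) (ZMod p), v 0 = X 0 → aeval v H = H) ∧
      H ^ q ^ c - H
        = (∑ i ∈ range d, (X 0 : MvPolynomial (Fin 2) (ZMod p)) ^ q ^ i)
          - ((γ : MvPolynomial (Fin 2) (ZMod p)) * ∑ i ∈ range c, (X 0) ^ q ^ i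
             + ∑ i ∈ range r, (X 0) ^ q ^ i) := by
  refine ⟨∑ i ∈ range d, ∑ k ∈ range (i / c),
      ((X 0 : MvPolynomial (Fin 2) (ZMod p)) ^ q ^ (i % c)) ^ (q ^ c) ^ k, ?_, ?_⟩
  · intro v hv
    simp only [map_sum, map_pow, aeval_X, hv]
  · rw [qpow_sum hq, ← Finset.sum_sub_distrib]
    have h1 : ∀ i ∈ range d,
        (∑ k ∈ range (i / c),
            ((X 0 : MvPolynomial (Fin 2) (ZMod p)) ^ q ^ (i % c)) ^ (q ^ c) ^ k) ^ q ^ c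
          - ∑ k ∈ range (i / c), ((X 0 : MvPolynomial (Fin 2) (ZMod p)) ^ q ^ (i % c)) ^ (q ^ c) ^ k
        = (X 0 : MvPolynomial (Fin 2) (ZMod p)) ^ q ^ i - (X 0) ^ q ^ (i % c) := by
      intro i _
      rw [geom_tel hq]
      congr 1
      rw [← pow_mul, ← pow_mul, ← pow_add, Nat.mod_add_div]
    rw [Finset.sum_congr rfl h1, Finset.sum_sub_distrib]
    congr 1
    rw [hdiv, sum_mod_split (fun t => (X 0 : MvPolynomial (Fin 2) (ZMod p)) ^ q ^ t) c γ r hr,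
      nsmul_eq_mul]

private noncomputable def substEquiv (v w : Fin 2 → MvPolynomial (Fin 2) (ZMod p))
    (hvw : ∀ i, aeval v (w i) = X i) (hwv : ∀ i, aeval w (v i) = X i) :
    MvPolynomial (Fin 2) (ZMod p) ≃ₐ[ZMod p] MvPolynomial (Fin 2) (ZMod p) :=
  AlgEquiv.ofAlgHom (aeval v) (aeval w)
    (algHom_ext fun i => by simpa using hvw i)
    (algHom_ext fun i => by simpa using hwv i)

private lemma substEquiv_apply (v w : Fin 2 → MvPolynomial (Fin 2) (ZMod p))
    (hvw : ∀ i, aeval v (w i) = X i) (hwv : ∀ i, aeval w (v i) = X i)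
    (f : MvPolynomial (Fin 2) (ZMod p)) :
    substEquiv v w hvw hwv f = aeval v f := rfl

end Helpers

/-- Euclidean-algorithm reduction of Artin–Schreier-type curves: with
`Tr_s(t) = ∑_{i<s} t^{q^i}` and `d = γc + r` (Euclidean division), `a,b < p`,
`0 < c < d`, the affine plane curve `a·Tr_c(x) + b·Tr_d(x) = Tr_d(y^q − y)` over
`𝔽_p` is `𝔽_p`-isomorphic to the curve `b·Tr_r(x) + (a+bγ)·Tr_c(x) = Tr_c(y^q − y)`. -/
theorem curve_euclidean_reduction
    (p : ℕ) [Fact p.Prime] (e q : ℕ) (he : 0 < e) (hq : q = p ^ e)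
    (a b c d γ r : ℕ) (ha0 : 0 < a) (hb0 : 0 < b) (hc0 : 0 < c) (hd0 : 0 < d)
    (ha : a < p) (hb : b < p) (hcd : c < d)
    (hdiv : d = γ * c + r) (hr : r < c)
    (Tr : ℕ → MvPolynomial (Fin 2) (ZMod p) → MvPolynomial (Fin 2) (ZMod p))
    (hTr : ∀ s t, Tr s t = ∑ i ∈ Finset.range s, t ^ q ^ i) :
    Nonempty
      ((MvPolynomial (Fin 2) (ZMod p) ⧸
          Ideal.span {(a : MvPolynomial (Fin 2) (ZMod p)) * Tr c (X 0) + b * Tr d (X 0)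
            - Tr d ((X 1) ^ q - X 1)}) ≃ₐ[ZMod p]
        (MvPolynomial (Fin 2) (ZMod p) ⧸
          Ideal.span {(b : MvPolynomial (Fin 2) (ZMod p)) * Tr r (X 0)
            + ((a : MvPolynomial (Fin 2) (ZMod p)) + b * γ) * Tr c (X 0)
            - Tr c ((X 1) ^ q - X 1)})) := by
  classical
  set α : ZMod p := (a : ZMod p) with hαdef
  set β : ZMod p := (b : ZMod p) with hβdef
  have hα0 : α ≠ 0 := by
    rw [hαdef, Ne, ZMod.natCast_eq_zero_iff]
    exact Nat.not_dvd_of_pos_of_lt ha0 ha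
  have hβ0 : β ≠ 0 := by
    rw [hβdef, Ne, ZMod.natCast_eq_zero_iff]
    exact Nat.not_dvd_of_pos_of_lt hb0 hb
  set μ : ZMod p := -(β * α⁻¹) with hμdef
  have hμ0 : μ ≠ 0 := by
    rw [hμdef]
    simp [hα0, hβ0]
  obtain ⟨H, hHfix, hH⟩ := H_spec (p := p) hq c d γ r hr hdiv
  -- cast lemmas
  have hca : (a : MvPolynomial (Fin 2) (ZMod p)) = C α := (map_natCast C a).symm
  have hcb : (b : MvPolynomial (Fin 2) (ZMod p)) = C β := (map_natCast C b).symm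
  -- the three substitutions
  set V1 : Fin 2 → MvPolynomial (Fin 2) (ZMod p) :=
    ![X 0 + C β⁻¹ * ((X 1) ^ q - X 1), X 1] with hV1
  set W1 : Fin 2 → MvPolynomial (Fin 2) (ZMod p) :=
    ![X 0 - C β⁻¹ * ((X 1) ^ q - X 1), X 1] with hW1
  have pf1 : ∀ i, aeval V1 (W1 i) = X i := by
    refine Fin.forall_fin_two.mpr ⟨?_, ?_⟩ <;>
      simp only [hV1, hW1, Matrix.cons_val_zero, Matrix.cons_val_one, Matrix.head_cons,
        map_sub, map_add, map_mul, map_pow, aeval_X, aeval_C, algebraMap_eq] <;>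
      ring
  have pf2 : ∀ i, aeval W1 (V1 i) = X i := by
    refine Fin.forall_fin_two.mpr ⟨?_, ?_⟩ <;>
      simp only [hV1, hW1, Matrix.cons_val_zero, Matrix.cons_val_one, Matrix.head_cons,
        map_sub, map_add, map_mul, map_pow, aeval_X, aeval_C, algebraMap_eq] <;>
      ring
  set V2 : Fin 2 → MvPolynomial (Fin 2) (ZMod p) := ![X 0, C μ * X 1] with hV2
  set W2 : Fin 2 → MvPolynomial (Fin 2) (ZMod p) := ![X 0, C μ⁻¹ * X 1] with hW2
  have pf3 : ∀ i, aeval V2 (W2 i) = X i := by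
    refine Fin.forall_fin_two.mpr ⟨?_, ?_⟩
    · simp [hV2, hW2]
    · simp only [hV2, hW2, Matrix.cons_val_one, Matrix.head_cons, map_mul, aeval_X, Matrix.cons_val_zero,
        aeval_C, algebraMap_eq]
      rw [← mul_assoc, ← C_mul, inv_mul_cancel₀ hμ0, C_1, one_mul]
  have pf4 : ∀ i, aeval W2 (V2 i) = X i := by
    refine Fin.forall_fin_two.mpr ⟨?_, ?_⟩
    · simp [hV2, hW2]
    · simp only [hV2, hW2, Matrix.cons_val_one, Matrix.head_cons, map_mul, aeval_X, Matrix.cons_val_zero,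
        aeval_C, algebraMap_eq]
      rw [← mul_assoc, ← C_mul, mul_inv_cancel₀ hμ0, C_1, one_mul]
  set V3 : Fin 2 → MvPolynomial (Fin 2) (ZMod p) := ![X 0, X 1 + C β * H] with hV3
  set W3 : Fin 2 → MvPolynomial (Fin 2) (ZMod p) := ![X 0, X 1 - C β * H] with hW3
  have hfix3 : aeval V3 H = H := hHfix V3 (by rw [hV3]; simp)
  have hfix3' : aeval W3 H = H := hHfix W3 (by rw [hW3]; simp)
  have pf5 : ∀ i, aeval V3 (W3 i) = X i := by
    refine Fin.forall_fin_two.mpr ⟨?_, ?_⟩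
    · simp [hV3, hW3]
    · show aeval V3 (W3 1) = X 1
      rw [hW3]
      simp only [Matrix.cons_val_one, Matrix.head_cons, map_sub, map_mul, aeval_C,
        algebraMap_eq, hfix3, aeval_X, hV3, Matrix.cons_val_one, Matrix.head_cons, Matrix.cons_val_zero]
      rw [← hV3, hfix3]
      ring
  have pf6 : ∀ i, aeval W3 (V3 i) = X i := by
    refine Fin.forall_fin_two.mpr ⟨?_, ?_⟩
    · simp [hV3, hW3]
    · show aeval W3 (V3 1) = X 1
      rw [hV3]
      simp only [Matrix.cons_val_one, Matrix.head_cons, map_add, map_mul, aeval_C,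
        algebraMap_eq, hfix3', aeval_X, hW3, Matrix.cons_val_one, Matrix.head_cons, Matrix.cons_val_zero]
      rw [← hW3, hfix3']
      ring
  -- step 1
  have h1 : aeval V1 ((a : MvPolynomial (Fin 2) (ZMod p)) * Tr c (X 0)
        + (b : MvPolynomial (Fin 2) (ZMod p)) * Tr d (X 0)
        - Tr d ((X 1) ^ q - X 1))
      = C α * (∑ i ∈ range c, (X 0 : MvPolynomial (Fin 2) (ZMod p)) ^ q ^ i)
        + C β * (∑ i ∈ range d, (X 0 : MvPolynomial (Fin 2) (ZMod p)) ^ q ^ i)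
        + C (α * β⁻¹) * ((X 1 : MvPolynomial (Fin 2) (ZMod p)) ^ q ^ c - X 1) := by
    simp only [hTr, map_add, map_sub, map_mul, map_natCast, map_sum, map_pow, aeval_X,
      hV1, Matrix.cons_val_zero, Matrix.cons_val_one, Matrix.head_cons]
    rw [trace_shift hq, trace_shift hq, trace_tel hq, hca, hcb]
    have hbb : (C β : MvPolynomial (Fin 2) (ZMod p)) * C β⁻¹ = 1 := by
      rw [← C_mul, mul_inv_cancel₀ hβ0, C_1]
    linear_combination ((X 1 : MvPolynomial (Fin 2) (ZMod p)) ^ q ^ d - X 1) * hbb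
  -- step 2
  have h2 : aeval V2 (C α * (∑ i ∈ range c, (X 0 : MvPolynomial (Fin 2) (ZMod p)) ^ q ^ i)
        + C β * (∑ i ∈ range d, (X 0 : MvPolynomial (Fin 2) (ZMod p)) ^ q ^ i)
        + C (α * β⁻¹) * ((X 1 : MvPolynomial (Fin 2) (ZMod p)) ^ q ^ c - X 1))
      = C α * (∑ i ∈ range c, (X 0 : MvPolynomial (Fin 2) (ZMod p)) ^ q ^ i)
        + C β * (∑ i ∈ range d, (X 0 : MvPolynomial (Fin 2) (ZMod p)) ^ q ^ i)
        - ((X 1 : MvPolynomial (Fin 2) (ZMod p)) ^ q ^ c - X 1) := by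
    simp only [map_add, map_sub, map_mul, map_sum, map_pow, aeval_X, aeval_C, algebraMap_eq,
      hV2, Matrix.cons_val_zero, Matrix.cons_val_one, Matrix.head_cons]
    have hcm : ((C μ : MvPolynomial (Fin 2) (ZMod p)) * X 1) ^ q ^ c = C μ * (X 1) ^ q ^ c := by
      rw [mul_pow, qpow_C hq]
    rw [hcm]
    have hμc : (C (α * β⁻¹) : MvPolynomial (Fin 2) (ZMod p)) * C μ = -1 := by
      rw [← C_mul]
      have : α * β⁻¹ * μ = -1 := by
        rw [hμdef]; field_simp
      rw [this, map_neg, C_1]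
    have hab : (C α : MvPolynomial (Fin 2) (ZMod p)) * C β⁻¹ = C (α * β⁻¹) := by
      rw [← C_mul]
    linear_combination ((X 1 : MvPolynomial (Fin 2) (ZMod p)) ^ q ^ c - X 1) * hμc
      + C μ * ((X 1 : MvPolynomial (Fin 2) (ZMod p)) ^ q ^ c - X 1) * hab
  -- step 3
  have h3 : aeval V3 (C α * (∑ i ∈ range c, (X 0 : MvPolynomial (Fin 2) (ZMod p)) ^ q ^ i)
        + C β * (∑ i ∈ range d, (X 0 : MvPolynomial (Fin 2) (ZMod p)) ^ q ^ i)
        - ((X 1 : MvPolynomial (Fin 2) (ZMod p)) ^ q ^ c - X 1))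
      = C β * (∑ i ∈ range r, (X 0 : MvPolynomial (Fin 2) (ZMod p)) ^ q ^ i)
        + (C α + C β * (γ : MvPolynomial (Fin 2) (ZMod p)))
          * (∑ i ∈ range c, (X 0 : MvPolynomial (Fin 2) (ZMod p)) ^ q ^ i)
        - ((X 1 : MvPolynomial (Fin 2) (ZMod p)) ^ q ^ c - X 1) := by
    simp only [map_add, map_sub, map_mul, map_sum, map_pow, aeval_X, aeval_C, algebraMap_eq,
      hV3, Matrix.cons_val_zero, Matrix.cons_val_one, Matrix.head_cons, hfix3]
    have hx : ((X 1 : MvPolynomial (Fin 2) (ZMod p)) + C β * H) ^ q ^ c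
        = (X 1 : MvPolynomial (Fin 2) (ZMod p)) ^ q ^ c + C β * H ^ q ^ c := by
      rw [qpow_add hq, mul_pow, qpow_C hq]
    rw [hx]
    linear_combination (-(C β : MvPolynomial (Fin 2) (ZMod p))) * hH
  -- assemble
  set φ : MvPolynomial (Fin 2) (ZMod p) ≃ₐ[ZMod p] MvPolynomial (Fin 2) (ZMod p) :=
    ((substEquiv V1 W1 pf1 pf2).trans (substEquiv V2 W2 pf3 pf4)).trans
      (substEquiv V3 W3 pf5 pf6) with hφdef
  have hφ : φ ((a : MvPolynomial (Fin 2) (ZMod p)) * Tr c (X 0)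
        + (b : MvPolynomial (Fin 2) (ZMod p)) * Tr d (X 0)
        - Tr d ((X 1) ^ q - X 1))
      = (b : MvPolynomial (Fin 2) (ZMod p)) * Tr r (X 0)
        + ((a : MvPolynomial (Fin 2) (ZMod p))
            + (b : MvPolynomial (Fin 2) (ZMod p)) * (γ : MvPolynomial (Fin 2) (ZMod p)))
          * Tr c (X 0)
        - Tr c ((X 1) ^ q - X 1) := by
    rw [hφdef]
    simp only [AlgEquiv.trans_apply, substEquiv_apply]
    rw [h1, h2, h3]
    simp only [hTr]
    rw [trace_tel hq, hca, hcb]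
  refine ⟨Ideal.quotientEquivAlg _ _ φ ?_⟩
  rw [Ideal.map_span, Set.image_singleton]
  congr 1
  exact congrArg singleton hφ.symm
end

section
/- Let S be a commutative ring, n ≥ 2 and 1 ≤ i₀ ≤ n−1. Let x₁, …, x_n ∈ S and σ a ring endomorphism of S. Let g_n(x) be the n×n matrix whose j-th column is σ^{j−1} applied entrywise to (x₁,…,x_n). For 1 ≤ i ≤ i₀ let m_i be the (n−i₀+1)×(n−i₀+1) minor of g_n(x) formed from rows i, i₀+1, i₀+2, …, n and the first n−i₀+1 columns. Let g_{i₀}(m) be the i₀×i₀ matrix whose j-th column is σ^{j−1}(m₁,…,m_{i₀}), and g_{n−i₀}(x′) the (n−i₀)×(n−i₀) matrix built analogously from x′ = (x_{i₀+1},…,x_n). Then det g_{i₀}(m) = det g_n(x) · Π_{j=1}^{i₀−1} σ^j(det g_{n−i₀}(x′)). -/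
/-- The `σ`-twisted Moore-type matrix of a vector `v`: its `j`-th column is
`σ^j` applied entrywise to `v`. -/
noncomputable def gmat {S : Type*} [CommRing S] (σ : S →+* S) {r : ℕ}
    (v : Fin r → S) : Matrix (Fin r) (Fin r) S :=
  Matrix.of fun i j => (σ ^ (j : ℕ)) (v i)

/-- For `1 ≤ i₀ < n`, the vector of minors `m_i` of `gmat σ x`:  `m_i` is the
determinant of the `(n−i₀+1)×(n−i₀+1)` submatrix with rows `i, i₀+1, …, n`
(1-indexed) and the first `n−i₀+1` columns. -/
noncomputable def minorVec {S : Type*} [CommRing S] (σ : S →+* S) {n : ℕ}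
    (i₀ : ℕ) (h : i₀ < n) (x : Fin n → S) : Fin i₀ → S := fun i =>
  (gmat σ (fun a : Fin (n - i₀ + 1) =>
    if (a : ℕ) = 0 then x ⟨(i : ℕ), lt_trans i.2 h⟩
    else x ⟨i₀ + (a : ℕ) - 1, by have := a.2; omega⟩)).det

namespace DetMinorAux

lemma val_succAbove {w : ℕ} (t : Fin (w + 1)) (s : Fin w) :
    ((t.succAbove s : Fin (w + 1)) : ℕ) = if (s : ℕ) < (t : ℕ) then (s : ℕ) else (s : ℕ) + 1 := by
  by_cases hs : (s : ℕ) < (t : ℕ)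
  · rw [Fin.succAbove_of_castSucc_lt _ _ (by rwa [Fin.lt_def, Fin.coe_castSucc]), if_pos hs,
      Fin.coe_castSucc]
  · rw [Fin.succAbove_of_le_castSucc _ _ (by rw [Fin.le_def, Fin.coe_castSucc]; omega),
      if_neg hs, Fin.val_succ]

lemma gmat_det_map {R S : Type*} [CommRing R] [CommRing S] (φ : R →+* S) (σR : R →+* R)
    (σS : S →+* S) (hc : ∀ (k : ℕ) (a : R), φ ((σR ^ k) a) = (σS ^ k) (φ a)) {r : ℕ}
    (v : Fin r → R) :
    φ (gmat σR v).det = (gmat σS (fun i => φ (v i))).det := by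
  rw [RingHom.map_det]
  congr 1
  ext i j
  simp only [Matrix.map_apply, gmat, Matrix.of_apply]
  exact hc _ _

lemma pow_apply_gmat_det {S : Type*} [CommRing S] (σ : S →+* S) {r : ℕ} (j : ℕ) (v : Fin r → S) :
    (σ ^ j) (gmat σ v).det =
      (Matrix.of fun i t : Fin r => (σ ^ (j + (t : ℕ))) (v i)).det := by
  rw [RingHom.map_det]
  congr 1
  ext i t
  simp only [Matrix.map_apply, gmat, Matrix.of_apply, pow_add, RingHom.mul_def,
    RingHom.coe_comp, Function.comp_apply]
  rfl

lemma prod_shift {S : Type*} [CommRing S] (σ : S →+* S) (i₀ : ℕ) (h1 : 1 ≤ i₀) (d : S) :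
    ∏ j : Fin i₀, (σ ^ ((j : ℕ) + 1)) d =
      (∏ j ∈ Finset.Icc 1 (i₀ - 1), (σ ^ j) d) * (σ ^ i₀) d := by
  have h2 : Finset.Icc 1 (i₀ - 1) = Finset.Ico 1 i₀ := by
    rw [← Finset.Ico_add_one_right_eq_Icc]
    congr 1
    omega
  rw [Fin.prod_univ_eq_prod_range (fun j => (σ ^ (j + 1)) d) i₀, h2,
    Finset.prod_Ico_eq_prod_range]
  obtain ⟨k, rfl⟩ : ∃ k, i₀ = k + 1 := ⟨i₀ - 1, by omega⟩
  rw [Finset.prod_range_succ]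
  simp [add_comm]

def rho (i₀ : ℕ) {n : ℕ} : Fin (n - i₀) → Fin n := fun t => ⟨i₀ + t, by have := t.2; omega⟩

noncomputable def Bh {S : Type*} [CommRing S] (σ : S →+* S) (n i₀ : ℕ) (x : Fin n → S) :
    Matrix (Fin n) (Fin n) S :=
  Matrix.of fun c j =>
    if hj : (j : ℕ) < i₀ then
      if (j : ℕ) ≤ (c : ℕ) ∧ (c : ℕ) ≤ (j : ℕ) + (n - i₀) then
        (-1) ^ ((c : ℕ) - (j : ℕ)) *
          ((gmat σ x).submatrix (rho i₀) (fun s : Fin (n - i₀) =>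
            if (j : ℕ) + (s : ℕ) < (c : ℕ) then ⟨(j : ℕ) + s, by have := s.2; omega⟩
            else ⟨(j : ℕ) + s + 1, by have := s.2; omega⟩)).det
      else 0
    else if (c : ℕ) = (j : ℕ) then 1 else 0

noncomputable def Pm {S : Type*} [CommRing S] (σ : S →+* S) {n : ℕ} (i₀ : ℕ) (h : i₀ < n)
    (x : Fin n → S) : Matrix (Fin n) (Fin n) S :=
  Matrix.of fun r j =>
    if hj : (j : ℕ) < i₀ then
      ((gmat σ x).submatrix (Fin.cons r (rho i₀)) (fun t : Fin (n - i₀ + 1) =>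
        (⟨(j : ℕ) + t, by have := t.2; omega⟩ : Fin n))).det
    else (gmat σ x) r j

lemma mul_Bh {S : Type*} [CommRing S] (σ : S →+* S) {n i₀ : ℕ} (h : i₀ < n) (x : Fin n → S) :
    gmat σ x * Bh σ n i₀ x = Pm σ i₀ h x := by
  ext r j
  rw [Matrix.mul_apply]
  by_cases hj : (j : ℕ) < i₀
  · have hjw : (j : ℕ) + (n - i₀) < n := by omega
    let emb : Fin (n - i₀ + 1) ↪ Fin n :=
      ⟨fun t => ⟨(j : ℕ) + t, by have := t.2; omega⟩, by
        intro a b hab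
        have : (j : ℕ) + a = (j : ℕ) + b := congrArg Fin.val hab
        exact Fin.ext (by omega)⟩
    have hzero : ∀ c ∈ Finset.univ, c ∉ Finset.univ.map emb →
        gmat σ x r c * Bh σ n i₀ x c j = 0 := by
      intro c _ hc
      have hband : ¬ ((j : ℕ) ≤ (c : ℕ) ∧ (c : ℕ) ≤ (j : ℕ) + (n - i₀)) := by
        intro hcb
        exact hc (Finset.mem_map.mpr ⟨⟨(c : ℕ) - j, by omega⟩, Finset.mem_univ _,
          Fin.ext (by show (j : ℕ) + ((c : ℕ) - j) = c; omega)⟩)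
      simp only [Bh, Matrix.of_apply, dif_pos hj, if_neg hband, mul_zero]
    rw [← Finset.sum_subset (Finset.subset_univ _) hzero, Finset.sum_map]
    simp only [Pm, Matrix.of_apply, dif_pos hj]
    rw [Matrix.det_succ_row_zero]
    refine Finset.sum_congr rfl fun t _ => ?_
    have hband : (j : ℕ) ≤ ((emb t : Fin n) : ℕ) ∧
        ((emb t : Fin n) : ℕ) ≤ (j : ℕ) + (n - i₀) := by
      simp only [emb, Function.Embedding.coeFn_mk]
      show (j : ℕ) ≤ (j : ℕ) + (t : ℕ) ∧ (j : ℕ) + (t : ℕ) ≤ (j : ℕ) + (n - i₀)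
      have := t.2; omega
    have hsub : ((gmat σ x).submatrix (Fin.cons r (rho i₀)) (fun u : Fin (n - i₀ + 1) =>
          (⟨(j : ℕ) + u, by have := u.2; omega⟩ : Fin n))).submatrix Fin.succ t.succAbove =
        (gmat σ x).submatrix (rho i₀) (fun s : Fin (n - i₀) =>
          if (j : ℕ) + (s : ℕ) < ((emb t : Fin n) : ℕ) then ⟨(j : ℕ) + s, by have := s.2; omega⟩
          else ⟨(j : ℕ) + s + 1, by have := s.2; omega⟩) := by
      rw [Matrix.submatrix_submatrix]
      ext s u
      simp only [Matrix.submatrix_apply, Function.comp_apply, Fin.cons_succ]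
      have hv : ((emb t : Fin n) : ℕ) = (j : ℕ) + (t : ℕ) := rfl
      congr 1
      by_cases hu : (u : ℕ) < (t : ℕ)
      · rw [if_pos (by omega)]
        exact Fin.ext (by simp [val_succAbove, hu]; try omega)
      · rw [if_neg (by omega)]
        exact Fin.ext (by simp [val_succAbove, hu]; try omega)
    simp only [Bh, Matrix.of_apply, dif_pos hj, if_pos hband, hsub]
    have hct : ((emb t : Fin n) : ℕ) - (j : ℕ) = (t : ℕ) := by
      show (j : ℕ) + (t : ℕ) - (j : ℕ) = (t : ℕ); omega
    rw [hct]
    have hA0 : ((gmat σ x).submatrix (Fin.cons r (rho i₀)) (fun u : Fin (n - i₀ + 1) =>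
        (⟨(j : ℕ) + u, by have := u.2; omega⟩ : Fin n))) 0 t = gmat σ x r (emb t) := by
      simp only [Matrix.submatrix_apply, Fin.cons_zero]
      rfl
    rw [hA0]
    ring
  · simp only [Pm, Matrix.of_apply, dif_neg hj]
    rw [Finset.sum_eq_single j]
    · simp [Bh, hj]
    · intro c _ hcj
      have hv : ¬ ((c : ℕ) = (j : ℕ)) := fun hv => hcj (Fin.ext hv)
      simp [Bh, hj, hv]
    · intro habs; exact absurd (Finset.mem_univ j) habs

lemma det_Bh {S : Type*} [CommRing S] (σ : S →+* S) {n i₀ : ℕ} (h : i₀ < n) (x : Fin n → S) :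
    (Bh σ n i₀ x).det = ∏ j : Fin i₀, (σ ^ ((j : ℕ) + 1)) ((gmat σ (fun k : Fin (n - i₀) =>
      x ⟨i₀ + (k : ℕ), Nat.add_lt_of_lt_sub' k.2⟩)).det) := by
  rw [Matrix.det_of_lowerTriangular _ ?_]
  · let emb2 : Fin i₀ ↪ Fin n := Fin.castLEEmb h.le
    have hone : ∀ c ∈ Finset.univ, c ∉ Finset.univ.map emb2 → Bh σ n i₀ x c c = 1 := by
      intro c _ hc
      have hc' : ¬ (c : ℕ) < i₀ := fun hlt =>
        hc (Finset.mem_map.mpr ⟨⟨(c : ℕ), hlt⟩, Finset.mem_univ _, Fin.ext rfl⟩)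
      simp [Bh, hc']
    rw [← Finset.prod_subset (Finset.subset_univ _) hone, Finset.prod_map]
    refine Finset.prod_congr rfl fun t _ => ?_
    have ht : ((emb2 t : Fin n) : ℕ) < i₀ := by simpa [emb2] using t.2
    have hband : ((emb2 t : Fin n) : ℕ) ≤ ((emb2 t : Fin n) : ℕ) ∧
        ((emb2 t : Fin n) : ℕ) ≤ ((emb2 t : Fin n) : ℕ) + (n - i₀) := by omega
    simp only [Bh, Matrix.of_apply, dif_pos ht, if_pos hband, Nat.sub_self, pow_zero, one_mul]
    rw [pow_apply_gmat_det]
    congr 1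
    ext s u
    simp only [Matrix.submatrix_apply, Matrix.of_apply]
    rw [if_neg (by omega)]
    simp only [gmat, Matrix.of_apply]
    congr 1
    · congr 1
      simp [emb2]
      omega
  · intro i j hij
    rw [OrderDual.toDual_lt_toDual] at hij
    have hij' : (i : ℕ) < (j : ℕ) := Fin.lt_def.mp hij
    by_cases hj : (j : ℕ) < i₀
    · have hb : ¬ ((j : ℕ) ≤ (i : ℕ) ∧ (i : ℕ) ≤ (j : ℕ) + (n - i₀)) := by omega
      simp only [Bh, Matrix.of_apply, dif_pos hj, if_neg hb]
    · have hb : ¬ ((i : ℕ) = (j : ℕ)) := by omega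
      simp only [Bh, Matrix.of_apply, dif_neg hj, if_neg hb]

lemma det_Pm {S : Type*} [CommRing S] (σ : S →+* S) {n i₀ : ℕ} (h1 : 1 ≤ i₀) (h : i₀ < n)
    (x : Fin n → S) :
    (Pm σ i₀ h x).det =
      (gmat σ (minorVec σ i₀ h x)).det *
        (σ ^ i₀) ((gmat σ (fun k : Fin (n - i₀) =>
          x ⟨i₀ + (k : ℕ), Nat.add_lt_of_lt_sub' k.2⟩)).det) := by
  have hn : i₀ + (n - i₀) = n := by omega
  let e : Fin i₀ ⊕ Fin (n - i₀) ≃ Fin n := finSumFinEquiv.trans (finCongr hn)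
  have hel : ∀ i : Fin i₀, ((e (Sum.inl i) : Fin n) : ℕ) = (i : ℕ) := by
    intro i; simp [e]
  have her : ∀ s : Fin (n - i₀), ((e (Sum.inr s) : Fin n) : ℕ) = i₀ + (s : ℕ) := by
    intro s; simp [e]
  rw [← Matrix.det_submatrix_equiv_self e]
  have hblock : (Pm σ i₀ h x).submatrix e e =
      Matrix.fromBlocks (gmat σ (minorVec σ i₀ h x))
        (Matrix.of fun i t => (Pm σ i₀ h x) (e (Sum.inl i)) (e (Sum.inr t)))
        0
        (Matrix.of fun s t : Fin (n - i₀) =>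
          gmat σ x ⟨i₀ + (s : ℕ), Nat.add_lt_of_lt_sub' s.2⟩ ⟨i₀ + (t : ℕ), Nat.add_lt_of_lt_sub' t.2⟩) := by
    ext (i | s) (j | t)
    · simp only [Matrix.submatrix_apply, Matrix.fromBlocks_apply₁₁]
      have hj : ((e (Sum.inl j) : Fin n) : ℕ) < i₀ := by rw [hel]; exact j.2
      simp only [Pm, Matrix.of_apply, dif_pos hj]
      show _ = gmat σ (minorVec σ i₀ h x) i j
      rw [show gmat σ (minorVec σ i₀ h x) i j
          = (σ ^ (j : ℕ)) (minorVec σ i₀ h x i) from rfl, minorVec, pow_apply_gmat_det]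
      congr 1
      ext a b
      simp only [Matrix.submatrix_apply, Matrix.of_apply]
      simp only [gmat, Matrix.of_apply]
      congr 1
      induction a using Fin.cases with
        | zero =>
          rw [Fin.cons_zero, if_pos (by simp)]
          exact congrArg x (Fin.ext (hel i))
        | succ s =>
          rw [Fin.cons_succ, if_neg (by simp)]
          exact congrArg x (Fin.ext (by simp [rho]))
    · simp only [Matrix.submatrix_apply, Matrix.fromBlocks_apply₁₂, Matrix.of_apply]
    · simp only [Matrix.submatrix_apply, Matrix.fromBlocks_apply₂₁, Matrix.zero_apply]
      have hj : ((e (Sum.inl j) : Fin n) : ℕ) < i₀ := by rw [hel]; exact j.2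
      simp only [Pm, Matrix.of_apply, dif_pos hj]
      apply Matrix.det_zero_of_row_eq (Fin.succ_ne_zero s).symm
      funext b
      simp only [Matrix.submatrix_apply, Fin.cons_zero, Fin.cons_succ]
      congr 1
    · simp only [Matrix.submatrix_apply, Matrix.fromBlocks_apply₂₂, Matrix.of_apply]
      have hj : ¬ ((e (Sum.inr t) : Fin n) : ℕ) < i₀ := by rw [her]; omega
      simp only [Pm, Matrix.of_apply, dif_neg hj]
      congr 1
  rw [hblock, Matrix.det_fromBlocks_zero₂₁]
  congr 1
  rw [pow_apply_gmat_det]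
  congr 1

lemma lemA {S : Type*} [CommRing S] (σ : S →+* S) {n i₀ : ℕ} (h1 : 1 ≤ i₀) (h : i₀ < n)
    (x : Fin n → S) :
    (gmat σ (minorVec σ i₀ h x)).det *
        (σ ^ i₀) ((gmat σ (fun k : Fin (n - i₀) =>
          x ⟨i₀ + (k : ℕ), Nat.add_lt_of_lt_sub' k.2⟩)).det) =
      (gmat σ x).det * ∏ j : Fin i₀, (σ ^ ((j : ℕ) + 1))
        ((gmat σ (fun k : Fin (n - i₀) =>
          x ⟨i₀ + (k : ℕ), Nat.add_lt_of_lt_sub' k.2⟩)).det) := by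
  have hmul := congrArg Matrix.det (mul_Bh σ h x)
  rw [Matrix.det_mul, det_Bh σ h x, det_Pm σ h1 h x] at hmul
  exact hmul.symm

end DetMinorAux

namespace DetMinorAux

noncomputable def usig (n : ℕ) : MvPolynomial (Fin n × ℕ) ℤ →+* MvPolynomial (Fin n × ℕ) ℤ :=
  (MvPolynomial.rename (fun p : Fin n × ℕ => (p.1, p.2 + 1)) :
    MvPolynomial (Fin n × ℕ) ℤ →ₐ[ℤ] MvPolynomial (Fin n × ℕ) ℤ).toRingHom

lemma usig_X (n : ℕ) (i : Fin n) (m : ℕ) :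
    usig n (MvPolynomial.X (i, m)) = MvPolynomial.X (i, m + 1) := by
  simp [usig]

lemma usig_pow_X (n : ℕ) (k : ℕ) (i : Fin n) (m : ℕ) :
    ((usig n) ^ k) (MvPolynomial.X (i, m)) = MvPolynomial.X (i, m + k) := by
  induction k generalizing m with
  | zero => simp
  | succ t ih =>
    rw [pow_succ, RingHom.mul_def, RingHom.comp_apply, usig_X, ih]
    congr 2
    omega

lemma usig_inj (n : ℕ) : Function.Injective (usig n) := by
  have : Function.Injective (fun p : Fin n × ℕ => (p.1, p.2 + 1)) := by
    intro a b hab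
    simpa [Prod.ext_iff] using hab
  exact MvPolynomial.rename_injective _ this

noncomputable def phi {S : Type*} [CommRing S] (σ : S →+* S) {n : ℕ} (x : Fin n → S) :
    MvPolynomial (Fin n × ℕ) ℤ →+* S :=
  (MvPolynomial.aeval (fun p : Fin n × ℕ => (σ ^ p.2) (x p.1)) :
    MvPolynomial (Fin n × ℕ) ℤ →ₐ[ℤ] S).toRingHom

lemma phi_X {S : Type*} [CommRing S] (σ : S →+* S) {n : ℕ} (x : Fin n → S) (p : Fin n × ℕ) :
    phi σ x (MvPolynomial.X p) = (σ ^ p.2) (x p.1) := by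
  simp [phi]

lemma phi_comm_one {S : Type*} [CommRing S] (σ : S →+* S) {n : ℕ} (x : Fin n → S) :
    (phi σ x).comp (usig n) = σ.comp (phi σ x) := by
  apply MvPolynomial.ringHom_ext
  · intro a
    simp only [RingHom.coe_comp, Function.comp_apply]
    rw [show (usig n) (MvPolynomial.C a) = MvPolynomial.C a by simp [usig]]
    simp only [phi, AlgHom.toRingHom_eq_coe, RingHom.coe_coe, MvPolynomial.aeval_C]
    rw [show (algebraMap ℤ S) a = (a : S) by simp]
    rw [map_intCast]
  · intro p
    simp only [RingHom.coe_comp, Function.comp_apply]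
    obtain ⟨i, m⟩ := p
    rw [usig_X, phi_X, phi_X]
    rw [pow_succ', RingHom.mul_def, RingHom.comp_apply]

lemma phi_comm {S : Type*} [CommRing S] (σ : S →+* S) {n : ℕ} (x : Fin n → S) (k : ℕ)
    (a : MvPolynomial (Fin n × ℕ) ℤ) :
    phi σ x (((usig n) ^ k) a) = (σ ^ k) (phi σ x a) := by
  induction k generalizing a with
  | zero => simp
  | succ t ih =>
    have hone : phi σ x ((usig n) a) = σ (phi σ x a) := by
      rw [← RingHom.comp_apply, phi_comm_one, RingHom.comp_apply]
    calc phi σ x (((usig n) ^ (t + 1)) a)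
        = phi σ x (((usig n) ^ t) ((usig n) a)) := by
          rw [pow_succ, RingHom.mul_def, RingHom.comp_apply]
      _ = (σ ^ t) (phi σ x ((usig n) a)) := ih _
      _ = (σ ^ t) (σ (phi σ x a)) := by rw [hone]
      _ = (σ ^ (t + 1)) (phi σ x a) := by rw [pow_succ, RingHom.mul_def, RingHom.comp_apply]

lemma d0_ne (n i₀ : ℕ) (h : i₀ < n) :
    (gmat (usig n) (fun k : Fin (n - i₀) =>
      (MvPolynomial.X (⟨i₀ + (k : ℕ), Nat.add_lt_of_lt_sub' k.2⟩, 0) :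
        MvPolynomial (Fin n × ℕ) ℤ))).det ≠ 0 := by
  intro hzero
  have heval := congrArg
    (MvPolynomial.eval (fun p : Fin n × ℕ => if (p.1 : ℕ) = i₀ + p.2 then (1 : ℤ) else 0)) hzero
  rw [map_zero, RingHom.map_det, RingHom.mapMatrix_apply] at heval
  have hm : ((gmat (usig n) (fun k : Fin (n - i₀) =>
      (MvPolynomial.X (⟨i₀ + (k : ℕ), Nat.add_lt_of_lt_sub' k.2⟩, 0) :
        MvPolynomial (Fin n × ℕ) ℤ))).map
        (MvPolynomial.eval (fun p : Fin n × ℕ => if (p.1 : ℕ) = i₀ + p.2 then (1 : ℤ) else 0)))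
      = (1 : Matrix (Fin (n - i₀)) (Fin (n - i₀)) ℤ) := by
    ext s t
    simp only [Matrix.map_apply, gmat, Matrix.of_apply]
    rw [usig_pow_X, Nat.zero_add, MvPolynomial.eval_X]
    by_cases hst : s = t
    · subst hst
      simp [Matrix.one_apply]
    · have : ¬ (i₀ + (s : ℕ) = i₀ + (t : ℕ)) := by
        intro habs
        exact hst (Fin.ext (by omega))
      simp [Matrix.one_apply, this, Ne.symm hst, hst, Fin.val_inj]
  rw [hm, Matrix.det_one] at heval
  exact one_ne_zero heval

lemma minorVec_map {S : Type*} [CommRing S] (σ : S →+* S) {n : ℕ} (i₀ : ℕ) (h : i₀ < n)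
    (x : Fin n → S) (i : Fin i₀) :
    phi σ x (minorVec (usig n) i₀ h (fun i => MvPolynomial.X (i, 0)) i)
      = minorVec σ i₀ h x i := by
  unfold minorVec
  rw [gmat_det_map (phi σ x) (usig n) σ (phi_comm σ x)]
  refine congrArg Matrix.det (congrArg (gmat σ) (funext fun a => ?_))
  rw [apply_ite (phi σ x), phi_X, phi_X]
  simp

end DetMinorAux

open DetMinorAux in
/-- Turnbull-type determinantal identity (Lemma 5.2 of the paper): with
`m = (m_i)_{i≤i₀}` the vector of minors and `x' = (x_{i₀+1},…,x_n)`, one has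
`det g_{i₀}(m) = det g_n(x) · ∏_{j=1}^{i₀−1} σ^j(det g_{n−i₀}(x'))`. -/
theorem det_minor_identity
    (S : Type*) [CommRing S] (σ : S →+* S)
    (n i₀ : ℕ) (hn : 2 ≤ n) (h1 : 1 ≤ i₀) (h : i₀ < n)
    (x : Fin n → S) :
    (gmat σ (minorVec σ i₀ h x)).det =
      (gmat σ x).det *
        ∏ j ∈ Finset.Icc 1 (i₀ - 1),
          (σ ^ j) ((gmat σ (fun k : Fin (n - i₀) =>
            x ⟨i₀ + (k : ℕ), by have := k.2; omega⟩)).det) := by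
  classical
  set σ₀ := usig n with hσ₀
  set x₀ : Fin n → MvPolynomial (Fin n × ℕ) ℤ := fun i => MvPolynomial.X (i, 0) with hx₀
  have key := lemA σ₀ h1 h x₀
  rw [prod_shift σ₀ i₀ h1, ← mul_assoc] at key
  have hc0 : (σ₀ ^ i₀) ((gmat σ₀ (fun k : Fin (n - i₀) =>
      x₀ ⟨i₀ + (k : ℕ), by have := k.2; omega⟩)).det) ≠ 0 := by
    intro hz
    have hinj : Function.Injective ⇑(σ₀ ^ i₀) := by
      rw [hσ₀, RingHom.coe_pow]
      exact Function.Injective.iterate (usig_inj n) i₀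
    have : (gmat σ₀ (fun k : Fin (n - i₀) =>
        x₀ ⟨i₀ + (k : ℕ), by have := k.2; omega⟩)).det = 0 := by
      apply hinj
      rw [hz, map_zero]
    exact d0_ne n i₀ h this
  have keyc := mul_right_cancel₀ hc0 key
  calc (gmat σ (minorVec σ i₀ h x)).det
      = phi σ x ((gmat σ₀ (minorVec σ₀ i₀ h x₀)).det) := by
        rw [gmat_det_map (phi σ x) σ₀ σ (phi_comm σ x)]
        exact congrArg Matrix.det (congrArg (gmat σ)
          (funext fun i => (minorVec_map σ i₀ h x i).symm))
    _ = phi σ x ((gmat σ₀ x₀).det * ∏ j ∈ Finset.Icc 1 (i₀ - 1),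
          (σ₀ ^ j) ((gmat σ₀ (fun k : Fin (n - i₀) =>
            x₀ ⟨i₀ + (k : ℕ), by have := k.2; omega⟩)).det)) := by rw [keyc]
    _ = _ := by
        rw [map_mul, map_prod]
        congr 1
        · rw [gmat_det_map (phi σ x) σ₀ σ (phi_comm σ x)]
          exact congrArg Matrix.det (congrArg (gmat σ) (funext fun i => by
            simp only [hx₀]
            rw [phi_X]
            simp))
        · refine Finset.prod_congr rfl fun j _ => ?_
          rw [phi_comm σ x j, gmat_det_map (phi σ x) σ₀ σ (phi_comm σ x)]
          exact congrArg (σ ^ j) (congrArg Matrix.det (congrArg (gmat σ) (funext fun k => by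
            simp only [hx₀]
            rw [phi_X]
            simp)))
end

section
/- Let q be a prime power, n ≥ 1, and let T ≅ (𝔽̄_q^×)^n be the diagonal torus of GL_n over 𝔽̄_q, equipped with the twisted Frobenius F(t₁,…,t_n) = (t_n^q, t₁^q, …, t_{n−1}^q). Let δ : ℤ/nℤ → {0,1} be a nonzero function and χ : 𝔾_m → T the cocharacter a ↦ (a^{δ(1)},…,a^{δ(n)}). Let S_χ = {t ∈ T : t^{−1}F(t) ∈ im(χ)}. If 1 ≤ j < i ≤ n and δ does not factor through ℤ/nℤ → ℤ/gcd(n,i−j)ℤ, then S_χ ∩ ker(α_{i,j}) is finite, where α_{i,j} : T → 𝔾_m is the character (t₁,…,t_n) ↦ t_i t_j^{−1}. In particular the identity component of S_χ (which is one-dimensional) is not contained in ker(α_{i,j}). -/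
open Finset


/-- base-q digit uniqueness -/
lemma digit_unique (q : ℕ) (hq : 2 ≤ q) :
    ∀ (n : ℕ) (f g : ℕ → ℕ), (∀ s, f s < q) → (∀ s, g s < q) →
    (∑ s ∈ Finset.range n, q ^ s * f s = ∑ s ∈ Finset.range n, q ^ s * g s) →
    ∀ s < n, f s = g s := by
  intro n
  induction n with
  | zero => intro f g _ _ _ s hs; omega
  | succ m ih =>
    intro f g hf hg hsum s hs
    have hrw : ∀ h : ℕ → ℕ, ∑ s ∈ Finset.range (m+1), q ^ s * h s
        = q * (∑ s ∈ Finset.range m, q ^ s * h (s+1)) + h 0 := by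
      intro h
      rw [Finset.sum_range_succ']
      simp only [pow_zero, one_mul, Finset.mul_sum]
      congr 1
      apply Finset.sum_congr rfl
      intro x _
      ring
    rw [hrw f, hrw g] at hsum
    have h0 : f 0 = g 0 := by
      have := congrArg (fun x => x % q) hsum
      simp only [Nat.mul_add_mod] at this
      rwa [Nat.mod_eq_of_lt (hf 0), Nat.mod_eq_of_lt (hg 0)] at this
    have hsum' : ∑ s ∈ Finset.range m, q ^ s * f (s+1) = ∑ s ∈ Finset.range m, q ^ s * g (s+1) := by
      have hqpos : 0 < q := by omega
      have := hsum
      rw [h0] at this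
      exact Nat.eq_of_mul_eq_mul_left hqpos (by omega)
    rcases Nat.eq_zero_or_pos s with rfl | hspos
    · exact h0
    · have := ih (fun s => f (s+1)) (fun s => g (s+1)) (fun s => hf _) (fun s => hg _) hsum' (s-1) (by omega)
      simpa [Nat.sub_add_cancel hspos] using this

lemma pow_sub_eq_one' {G : Type*} [Group G] (a : G) {x y : ℕ} (h : a ^ x = a ^ y) :
    a ^ (y - x) = 1 := by
  rcases le_or_gt x y with hxy | hxy
  · have h2 : a ^ (y - x) * a ^ x = a ^ x := by
      rw [← pow_add, Nat.sub_add_cancel hxy, h]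
    calc a ^ (y-x) = a ^ (y-x) * a ^ x * (a ^ x)⁻¹ := by group
    _ = 1 := by rw [h2]; group
  · simp [Nat.sub_eq_zero_of_le hxy.le]

lemma finite_pow_eq_one {F : Type*} [Field F] {m : ℕ} (hm : m ≠ 0) :
    {x : Fˣ | x ^ m = 1}.Finite := by
  apply Set.Finite.of_finite_image (f := fun x : Fˣ => (x : F))
  · apply Set.Finite.subset (Multiset.finite_toSet (Polynomial.nthRoots m (1 : F)))
    rintro y ⟨x, hx, rfl⟩
    rw [Set.mem_setOf_eq, Polynomial.mem_nthRoots (Nat.pos_of_ne_zero hm)]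
    simpa using congrArg Units.val hx
  · exact fun x _ y _ h => Units.ext h

lemma infinite_units {F : Type*} [Field F] [Infinite F] : Infinite Fˣ := by
  have h1 : ({0}ᶜ : Set F).Infinite := (Set.finite_singleton 0).infinite_compl
  have := h1.to_subtype
  exact Infinite.of_injective (fun x : ({0}ᶜ : Set F) => Units.mk0 x.1 x.2)
    (fun x y h => Subtype.ext ((Units.mk0_inj _ _).mp h))

lemma Psucc (q : ℕ) (n : ℕ) [NeZero n] (δ : ZMod n → ℕ) (m : ℕ) (k : ZMod n) :
    ∑ s ∈ Finset.range (m+1), q ^ s * δ (k - (s : ZMod n))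
      = δ k + q * ∑ s ∈ Finset.range m, q ^ s * δ ((k - 1) - (s : ZMod n)) := by
  rw [Finset.sum_range_succ']
  simp only [pow_zero, one_mul, Nat.cast_zero, sub_zero]
  rw [add_comm, Finset.mul_sum]
  congr 1
  apply Finset.sum_congr rfl
  intro s _
  have h : k - ((s + 1 : ℕ) : ZMod n) = (k - 1) - (s : ZMod n) := by push_cast; ring
  rw [h, pow_succ]
  ring

/-- Lemma 3.4 of the paper.  Let `F` be an algebraically closed field of
characteristic `p`, `q = p^e > 1`, and let `T = (Fˣ)^{ℤ/n}` be the diagonal torus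
of `GL_n` with the twisted Frobenius `Fr(t)_k = t_{k-1}^q` (cyclic indexing).
Let `δ : ℤ/n → {0,1}` be nonzero, `χ(a)_k = a^{δ(k)}` the associated cocharacter
and `S_χ = {t : t⁻¹ Fr(t) ∈ im χ}`.  If `δ` is not periodic of period `i − j`
(i.e. does not factor through `ℤ/n → ℤ/gcd(n, i−j)`), then `S_χ ∩ ker α_{i,j}` is
finite, where `α_{i,j}(t) = t_i t_j^{-1}`; since `S_χ` is infinite
(one-dimensional), `S_χ` is not contained in `ker α_{i,j}`. -/
theorem Schi_inter_ker_alpha_finite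
    (p : ℕ) [Fact p.Prime] (F : Type*) [Field F] [IsAlgClosed F] [CharP F p]
    (e q : ℕ) (he : 0 < e) (hq : q = p ^ e)
    (n : ℕ) [NeZero n]
    (δ : ZMod n → ℕ) (hδle : ∀ a, δ a ≤ 1) (hδne : ∃ a, δ a ≠ 0)
    (i j : ZMod n) (hij : i ≠ j)
    (hfac : ¬ ∀ k : ZMod n, δ (k + (i - j)) = δ k) :
    {t : ZMod n → Fˣ | ∃ a : Fˣ, ∀ k : ZMod n,
        (t k)⁻¹ * (t (k - 1)) ^ q = a ^ δ k}.Infinite ∧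
    {t : ZMod n → Fˣ | (∃ a : Fˣ, ∀ k : ZMod n,
        (t k)⁻¹ * (t (k - 1)) ^ q = a ^ δ k) ∧ t i = t j}.Finite ∧
    ∃ t : ZMod n → Fˣ, (∃ a : Fˣ, ∀ k : ZMod n,
        (t k)⁻¹ * (t (k - 1)) ^ q = a ^ δ k) ∧ t i ≠ t j := by
  classical
  have hq2 : 2 ≤ q := by
    have : 1 < p ^ e := Nat.one_lt_pow he.ne' (Fact.out : p.Prime).one_lt
    omega
  have hn : 0 < n := Nat.pos_of_ne_zero (NeZero.ne n)
  have h1n : 1 ≤ q ^ n := Nat.one_le_pow _ _ (by omega)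
  have hqn1 : q ^ n - 1 ≠ 0 := by
    have : 2 ≤ q ^ n := by
      calc 2 = 2 ^ 1 := rfl
      _ ≤ q ^ n := Nat.pow_le_pow_left (by omega) 1 |>.trans (Nat.pow_le_pow_right (by omega) hn)
    omega
  set P : ℕ → ZMod n → ℕ := fun r k => ∑ s ∈ Finset.range r, q ^ s * δ (k - (s : ZMod n))
    with hPdef
  set D : ZMod n → ℕ := fun k => P n k with hDdef
  have hPs : ∀ (m : ℕ) (k : ZMod n), P (m + 1) k = δ k + q * P m (k - 1) := by
    intro m k
    simpa [hPdef] using Psucc q n δ m k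
  -- iteration lemma
  have iter : ∀ (t : ZMod n → Fˣ) (a : Fˣ),
      (∀ k, (t k)⁻¹ * (t (k - 1)) ^ q = a ^ δ k) →
      ∀ (r : ℕ) (k : ZMod n), t k * a ^ (P r k) = t (k - (r : ZMod n)) ^ (q ^ r) := by
    intro t a ht r
    induction r with
    | zero => intro k; simp [hPdef]
    | succ r ih =>
      intro k
      have h1 : (t (k - (r : ZMod n) - 1)) ^ q = t (k - (r : ZMod n)) * a ^ δ (k - (r : ZMod n)) := by
        rw [← ht (k - (r : ZMod n))]
        group
      have h2 : P (r + 1) k = P r k + q ^ r * δ (k - (r : ZMod n)) := by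
        simp [hPdef, Finset.sum_range_succ]
      have h3 : k - ((r : ℕ) + 1 : ℕ) = k - (r : ZMod n) - 1 := by
        push_cast
        ring
      calc t k * a ^ P (r + 1) k
          = (t k * a ^ P r k) * (a ^ δ (k - (r : ZMod n))) ^ (q ^ r) := by
            rw [h2, pow_add, ← pow_mul, mul_comm (q ^ r), pow_mul, mul_assoc]
      _ = (t (k - (r : ZMod n)) * a ^ δ (k - (r : ZMod n))) ^ (q ^ r) := by
            rw [ih k, mul_pow]
      _ = t (k - ((r : ℕ) + 1 : ℕ)) ^ q ^ (r + 1) := by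
            rw [← h1, h3, ← pow_mul, pow_succ, mul_comm (q ^ r) q, mul_comm q (q ^ r)]
  -- the n-step relation
  have hiterN : ∀ (t : ZMod n → Fˣ) (a : Fˣ),
      (∀ k, (t k)⁻¹ * (t (k - 1)) ^ q = a ^ δ k) →
      ∀ k : ZMod n, t k * a ^ (D k) = t k ^ (q ^ n) := by
    intro t a ht k
    have := iter t a ht n k
    rwa [ZMod.natCast_self, sub_zero] at this
  -- key inequality
  have hDij : D i ≠ D j := by
    intro h
    apply hfac
    intro k
    have hdig := digit_unique q hq2 n (fun s => δ (i - (s : ZMod n))) (fun s => δ (j - (s : ZMod n)))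
      (fun s => lt_of_le_of_lt (hδle _) (by omega)) (fun s => lt_of_le_of_lt (hδle _) (by omega)) h
    have hs : (((j - k).val : ℕ) : ZMod n) = j - k := by
      rw [ZMod.natCast_val, ZMod.cast_id]
    have hd := hdig (j - k).val (ZMod.val_lt _)
    rw [hs] at hd
    have e1 : i - (j - k) = k + (i - j) := by ring
    have e2 : j - (j - k) = k := by ring
    rwa [e1, e2] at hd
  obtain ⟨k0, hk0⟩ := hδne
  have hk01 : δ k0 = 1 := by have := hδle k0; omega
  set M : ℕ := (D j - D i) + (D i - D j) with hM
  have hMne : M ≠ 0 := by omega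
  -- FINITENESS
  have hfin : {t : ZMod n → Fˣ | (∃ a : Fˣ, ∀ k : ZMod n,
      (t k)⁻¹ * (t (k - 1)) ^ q = a ^ δ k) ∧ t i = t j}.Finite := by
    apply Set.Finite.of_finite_image
      (f := fun t : ZMod n → Fˣ => ((t 0, (t k0)⁻¹ * (t (k0 - 1)) ^ q) : Fˣ × Fˣ))
    · apply Set.Finite.subset
        (Set.Finite.prod (finite_pow_eq_one (F := F) (mul_ne_zero hqn1 hMne))
          (finite_pow_eq_one (F := F) hMne))
      rintro y ⟨t, ⟨⟨a, ha⟩, htij⟩, rfl⟩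
      have haval : (t k0)⁻¹ * (t (k0 - 1)) ^ q = a := by rw [ha k0, hk01, pow_one]
      have h1 : t i * a ^ D i = t i ^ q ^ n := hiterN t a ha i
      have h2 : t j * a ^ D j = t j ^ q ^ n := hiterN t a ha j
      rw [htij] at h1
      have haDij : a ^ D i = a ^ D j := mul_left_cancel (h1.trans h2.symm)
      have haM : a ^ M = 1 := by
        rw [hM, pow_add, pow_sub_eq_one' a haDij.symm, pow_sub_eq_one' a haDij, one_mul]
      have h0 : t 0 * a ^ D 0 = t 0 ^ q ^ n := hiterN t a ha 0
      have h0' : t 0 ^ (q ^ n - 1) = a ^ D 0 := by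
        have hqn : (q ^ n - 1) + 1 = q ^ n := by omega
        apply mul_right_cancel (b := t 0)
        rw [← pow_succ, hqn, ← h0]
        exact mul_comm _ _
      have hfst : t 0 ^ ((q ^ n - 1) * M) = 1 := by
        rw [pow_mul, h0', ← pow_mul, mul_comm (D 0), pow_mul, haM, one_pow]
      have hsnd : ((t k0)⁻¹ * (t (k0 - 1)) ^ q) ^ M = 1 := by
        rw [haval, haM]
      exact ⟨hfst, hsnd⟩
    · rintro t ⟨⟨a, ha⟩, -⟩ t' ⟨⟨a', ha'⟩, -⟩ hpair
      simp only [Prod.mk.injEq] at hpair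
      obtain ⟨h0eq, haeq⟩ := hpair
      have haa : a = a' := by
        have h := haeq
        rw [ha k0, ha' k0, hk01] at h
        simpa using h
      subst haa
      funext k
      have hkv : ((k.val : ℕ) : ZMod n) = k := by rw [ZMod.natCast_val, ZMod.cast_id]
      have e1 := iter t a ha k.val k
      have e2 := iter t' a ha' k.val k
      rw [hkv, sub_self] at e1 e2
      rw [h0eq] at e1
      exact mul_right_cancel (e1.trans e2.symm)
  -- INFINITENESS
  have hex : ∀ a : Fˣ, ∃ bb : Fˣ, bb ^ (q ^ n - 1) = a ^ D 0 := by
    intro a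
    obtain ⟨z, hz⟩ := IsAlgClosed.exists_pow_nat_eq (((a : F)) ^ D 0)
      (n := q ^ n - 1) (Nat.pos_of_ne_zero hqn1)
    have hz0 : z ≠ 0 := by
      intro h0
      rw [h0, zero_pow hqn1] at hz
      exact (pow_ne_zero _ (Units.ne_zero a)) hz.symm
    refine ⟨Units.mk0 z hz0, Units.ext ?_⟩
    simpa using hz
  choose b hb using hex
  set g : Fˣ → ZMod n → Fˣ := fun a k => b a ^ (q ^ k.val) * (a ^ P k.val k)⁻¹ with hg
  have hmem : ∀ a : Fˣ, ∀ k : ZMod n, (g a k)⁻¹ * (g a (k - 1)) ^ q = a ^ δ k := by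
    intro a k
    have hbn : b a ^ (q ^ n) = b a * a ^ D 0 := by
      calc b a ^ q ^ n = b a ^ ((q ^ n - 1) + 1) := by rw [Nat.sub_add_cancel h1n]
      _ = b a ^ (q ^ n - 1) * b a := by rw [pow_succ]
      _ = b a * a ^ D 0 := by rw [hb a, mul_comm]
    suffices hS : (g a (k - 1)) ^ q = g a k * a ^ δ k by
      rw [hS]; group
    by_cases hk : k = 0
    · subst hk
      have hm1 : (0 - 1 : ZMod n) = ((n - 1 : ℕ) : ZMod n) := by
        rw [Nat.cast_sub hn, ZMod.natCast_self, Nat.cast_one, zero_sub]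
      have hv1 : (0 - 1 : ZMod n).val = n - 1 := by
        rw [hm1, ZMod.val_cast_of_lt (by omega)]
      have hD0 : D 0 = δ 0 + q * P (n - 1) (0 - 1) := by
        have := hPs (n - 1) 0
        rw [Nat.sub_add_cancel hn] at this
        exact this
      simp only [hg, hv1, ZMod.val_zero]
      have hP0 : P 0 (0 : ZMod n) = 0 := by simp [hPdef]
      rw [hP0, pow_zero, pow_zero, pow_one, mul_pow, inv_pow, ← pow_mul, ← pow_mul,
        mul_comm (q ^ (n - 1)) q, ← pow_succ', Nat.sub_add_cancel hn, hbn, hD0,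
        mul_comm (P (n - 1) (0 - 1)) q, pow_add]
      group
    · have hv : 1 ≤ k.val := by
        have := (ZMod.val_eq_zero k).not
        have hkv0 : k.val ≠ 0 := fun h => hk ((ZMod.val_eq_zero k).mp h)
        omega
      have hkv : ((k.val : ℕ) : ZMod n) = k := by rw [ZMod.natCast_val, ZMod.cast_id]
      have hk1 : k - 1 = ((k.val - 1 : ℕ) : ZMod n) := by
        rw [Nat.cast_sub hv, Nat.cast_one, hkv]
      have hv2 : (k - 1).val = k.val - 1 := by
        rw [hk1, ZMod.val_cast_of_lt (by have := ZMod.val_lt k; omega)]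
      have hPk : P k.val k = δ k + q * P (k.val - 1) (k - 1) := by
        have := hPs (k.val - 1) k
        rw [Nat.sub_add_cancel hv] at this
        exact this
      simp only [hg, hv2]
      rw [hPk, mul_pow, inv_pow, ← pow_mul, ← pow_mul, mul_comm (q ^ (k.val - 1)) q,
        ← pow_succ', Nat.sub_add_cancel hv, mul_comm (P (k.val - 1) (k - 1)) q, pow_add]
      group
  have hInfF : Infinite Fˣ := infinite_units
  have hinj : Function.Injective g := by
    intro a a' h
    have h1 := hmem a k0
    rw [h] at h1
    have h2 := hmem a' k0
    rw [hk01, pow_one] at h1 h2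
    rw [← h1, h2]
  have hinf : {t : ZMod n → Fˣ | ∃ a : Fˣ, ∀ k : ZMod n,
      (t k)⁻¹ * (t (k - 1)) ^ q = a ^ δ k}.Infinite :=
    Set.infinite_of_injective_forall_mem hinj (fun a => ⟨a, hmem a⟩)
  refine ⟨hinf, hfin, ?_⟩
  by_contra hcon
  push_neg at hcon
  apply hinf
  apply Set.Finite.subset hfin
  rintro t ⟨a, ha⟩
  exact ⟨⟨a, ha⟩, hcon t ⟨a, ha⟩⟩
end

section
/- Let w ∈ S_n be a permutation (viewed as a bijection of ℤ/nℤ) with w ≠ 1, and suppose there is no i with 2 ≤ i ≤ n such that [w(i)] > [w(i−1)+1] > 1, where [a] is the representative of a mod n in {1,…,n}. Then there exist s ≥ 1 and integers 0 = i₀ < i₁ < ⋯ < i_{s−1} < i_s = n with i₁ < n such that for each 1 ≤ j ≤ s and each i_{j−1}+1 ≤ i ≤ i_j one has w(i) = n − i_{j−1} − (i_j − i). -/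
/-- Auxiliary block-decomposition lemma for a function `F : ℕ → ℕ` that is a
bijection on `[0,n)`, satisfies the step condition `F (r+1) ≤ F r + 1` whenever
`F r ≠ n - 1`, starting from a position `p` whose strict predecessors take
exactly the values `[n-p, n)`. -/
private lemma aux_run_blocks (n : ℕ) (F : ℕ → ℕ)
    (hFlt : ∀ i, i < n → F i < n)
    (hFinj : ∀ i j, i < n → j < n → F i = F j → i = j)
    (hFsurj : ∀ v, v < n → ∃ i, i < n ∧ F i = v)
    (hFstep : ∀ r, r + 1 < n → F r + 1 < n → F (r + 1) ≤ F r + 1) :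
    ∀ d p, p < n → n - p ≤ d → (∀ i, i < n → (i < p ↔ n - p ≤ F i)) →
    ∃ s : ℕ, 1 ≤ s ∧ ∃ I : ℕ → ℕ,
      I 0 = p ∧ I s = n ∧ (∀ j k : ℕ, j < k → k ≤ s → I j < I k) ∧
      ∀ j : ℕ, 1 ≤ j → j ≤ s → ∀ i : ℕ, I (j - 1) ≤ i → i < I j →
        F i + I (j - 1) + I j = n + i := by
  intro d
  induction d using Nat.strong_induction_on with
  | _ d ih =>
    intro p hpn hd hiff
    set b := F p with hbdef
    have hbn : b < n - p := by
      by_contra h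
      exact absurd ((hiff p hpn).2 (le_of_not_gt h)) (lt_irrefl p)
    obtain ⟨q, hqn, hq⟩ := hFsurj (n - p - 1) (by omega)
    have hpq : p ≤ q := by
      by_contra h
      have := (hiff q hqn).1 (by omega)
      omega
    -- the maximal run ending at position q (which carries the top remaining value)
    have run : ∀ t, t ≤ q - p → F (q - t) = n - p - 1 - t := by
      intro t
      induction t using Nat.strong_induction_on with
      | _ t iht =>
        intro ht
        match t with
        | 0 => simpa using hq
        | t + 1 =>
          have hr1 : F (q - t) = n - p - 1 - t := iht t (by omega) (by omega)
          set r := q - (t + 1) with hrdef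
          have hrq : r + 1 = q - t := by omega
          have hFr : F r < n := hFlt r (by omega)
          have hFrne : F r ≠ n - 1 := by
            intro h
            rcases Nat.eq_zero_or_pos p with hp0 | hp0
            · have h2 : F r = F q := by omega
              have := hFinj r q (by omega) hqn h2
              omega
            · have := (hiff r (by omega)).2 (by omega)
              omega
          have hstep := hFstep r (by omega) (by omega)
          rw [hrq, hr1] at hstep
          have hFrlt : F r < n - p := by
            by_contra h
            have := (hiff r (by omega)).2 (by omega)
            omega
          have hne : ¬ (n - p - 1 - t ≤ F r) := by
            intro h
            set t'' := n - p - 1 - F r with ht''def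
            have h1 : F (q - t'') = n - p - 1 - t'' := iht t'' (by omega) (by omega)
            have h2 : F r = F (q - t'') := by omega
            have := hFinj r (q - t'') (by omega) (by omega) h2
            omega
          omega
    have hFp : b = n - p - 1 - (q - p) := by
      have h := run (q - p) le_rfl
      have h4 : q - (q - p) = p := by omega
      rw [h4] at h
      omega
    have hrun : ∀ i, p ≤ i → i ≤ q → F i = b + (i - p) := by
      intro i h1 h2
      have h := run (q - i) (by omega)
      have h3 : q - (q - i) = i := by omega
      rw [h3] at h
      omega
    rcases Nat.eq_zero_or_pos b with hb0 | hb0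
    · -- single final block: positions [p, n) carry values [0, n-p)
      have hqtop : q = n - 1 := by omega
      refine ⟨1, le_rfl, (fun j => if j = 0 then p else n), by simp, by simp, ?_, ?_⟩
      · intro j k hjk hk
        have hk1 : k = 1 := by omega
        have hj0 : j = 0 := by omega
        subst hk1; subst hj0
        norm_num
        exact hpn
      · intro j hj1 hj2 i hi1 hi2
        have hj : j = 1 := by omega
        subst hj
        norm_num at hi1 hi2 ⊢
        have := hrun i hi1 (by omega)
        omega
    · -- recurse past the first block [p, q+1)
      set p' := q + 1 with hp'def
      have hp'n : p' < n := by omega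
      have hiff' : ∀ i, i < n → (i < p' ↔ n - p' ≤ F i) := by
        intro i hin
        have hnp' : n - p' = b := by omega
        rw [hnp']
        constructor
        · intro h
          rcases lt_or_ge i p with h2 | h2
          · have := (hiff i hin).1 h2; omega
          · have := hrun i h2 (by omega); omega
        · intro h
          by_contra h2
          have h3 : ¬ i < p := by omega
          have h4 : F i < n - p := by
            by_contra h5
            exact h3 ((hiff i hin).2 (le_of_not_gt h5))
          set t'' := F i - b with ht''def
          have h5 := hrun (p + t'') (by omega) (by omega)
          have h6 : F i = F (p + t'') := by omega
          have := hFinj i (p + t'') hin (by omega) h6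
          omega
      obtain ⟨s', hs', I', hI0, hIs, hImono, hIblk⟩ :=
        ih (n - p') (by omega) p' hp'n le_rfl hiff'
      refine ⟨s' + 1, by omega, (fun j => if j = 0 then p else I' (j - 1)), by simp, ?_, ?_, ?_⟩
      · simpa using hIs
      · intro j k hjk hk
        rcases Nat.eq_zero_or_pos j with hj0 | hj0
        · subst hj0
          have hk0 : k ≠ 0 := by omega
          simp only [reduceIte, if_neg hk0]
          have hle : p' ≤ I' (k - 1) := by
            rcases Nat.eq_zero_or_pos (k - 1) with h | h
            · rw [h, hI0]
            · have := hImono 0 (k - 1) h (by omega)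
              omega
          omega
        · simp only [if_neg (show j ≠ 0 by omega), if_neg (show k ≠ 0 by omega)]
          exact hImono (j - 1) (k - 1) (by omega) (by omega)
      · intro j hj1 hj2 i hi1 hi2
        rcases Nat.eq_or_lt_of_le hj1 with hj | hj
        · -- first block
          have hj' : j = 1 := hj.symm
          subst hj'
          simp only [Nat.sub_self, reduceIte, if_neg (show (1:ℕ) ≠ 0 by omega), hI0] at hi1 hi2 ⊢
          have := hrun i hi1 (by omega)
          omega
        · -- later blocks, from the recursive call
          have hj0 : j ≠ 0 := by omega
          have hj10 : j - 1 ≠ 0 := by omega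
          simp only [if_neg hj10] at hi1 ⊢
          simp only [if_neg hj0] at hi2 ⊢
          exact hIblk (j - 1) (by omega) (by omega) i hi1 hi2

/-- Structure of permutations avoiding the pattern `[w(i)] > [w(i−1)+1] > 1`.
We index positions by `Fin n` (position `i ∈ {0,…,n−1}` corresponds to the paper's
`i+1 ∈ {1,…,n}`, and values are likewise shifted by one); the cyclic bracket
`[a]` is computed via the cyclic addition of `Fin n`.  If `w ≠ 1` and there is no
pair of consecutive positions `ipred, i` (with `(ipred:ℕ)+1 = (i:ℕ)`) such that
`(w ipred + 1 : Fin n)` is nonzero and strictly below `w i`, then `w` decomposes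
into blocks: there are `s ≥ 1` and `0 = I 0 < I 1 < ⋯ < I s = n` with `I 1 < n`
such that on each block `I(j−1) ≤ i < I j` one has
`w(i) = n − 1 − I(j−1) − (I j − 1 − i)`, i.e. `(w i : ℕ) + I (j−1) + I j = n + i`. -/
theorem coxeter_pattern_block_structure
    (n : ℕ) [NeZero n] (w : Equiv.Perm (Fin n)) (hw : w ≠ 1)
    (hpat : ∀ i ipred : Fin n, (ipred : ℕ) + 1 = (i : ℕ) →
      ¬ (((w ipred + 1 : Fin n) : ℕ) < ((w i : ℕ)) ∧ 0 < ((w ipred + 1 : Fin n) : ℕ))) :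
    ∃ s : ℕ, 1 ≤ s ∧ ∃ I : ℕ → ℕ,
      I 0 = 0 ∧ I s = n ∧ (∀ j k : ℕ, j < k → k ≤ s → I j < I k) ∧ I 1 < n ∧
      ∀ j : ℕ, 1 ≤ j → j ≤ s → ∀ i : Fin n,
        I (j - 1) ≤ (i : ℕ) → (i : ℕ) < I j →
          ((w i : ℕ)) + I (j - 1) + I j = n + (i : ℕ) := by
  obtain ⟨m, rfl⟩ : ∃ m, n = m + 1 := Nat.exists_eq_succ_of_ne_zero (NeZero.ne n)
  set F : ℕ → ℕ := fun i => if h : i < m + 1 then ((w ⟨i, h⟩ : Fin (m + 1)) : ℕ) else 0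
    with hFdef
  have hFval : ∀ (i : Fin (m + 1)), F (i : ℕ) = ((w i : Fin (m + 1)) : ℕ) := by
    intro i
    simp [hFdef, i.isLt]
    intro h; exact absurd i.isLt (by omega)
  have hFlt : ∀ i, i < m + 1 → F i < m + 1 := by
    intro i h
    have := hFval ⟨i, h⟩
    simp only [Fin.val_mk] at this
    rw [this]
    exact (w ⟨i, h⟩).isLt
  have hFinj : ∀ i j, i < m + 1 → j < m + 1 → F i = F j → i = j := by
    intro i j hi hj hij
    have h1 := hFval ⟨i, hi⟩
    have h2 := hFval ⟨j, hj⟩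
    simp only [Fin.val_mk] at h1 h2
    rw [h1, h2] at hij
    have := w.injective (Fin.ext hij)
    exact congrArg Fin.val this
  have hFsurj : ∀ v, v < m + 1 → ∃ i, i < m + 1 ∧ F i = v := by
    intro v hv
    refine ⟨((w.symm ⟨v, hv⟩ : Fin (m + 1)) : ℕ), (w.symm ⟨v, hv⟩).isLt, ?_⟩
    rw [hFval (w.symm ⟨v, hv⟩)]
    simp
  have hFstep : ∀ r, r + 1 < m + 1 → F r + 1 < m + 1 → F (r + 1) ≤ F r + 1 := by
    intro r hr hFr
    have hrm : r < m + 1 := by omega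
    have h1 := hFval ⟨r, hrm⟩
    have h2 := hFval ⟨r + 1, hr⟩
    simp only [Fin.val_mk] at h1 h2
    have hne : w ⟨r, hrm⟩ ≠ Fin.last m := by
      intro h
      rw [h] at h1
      simp only [Fin.val_last] at h1
      omega
    have hval : ((w ⟨r, hrm⟩ + 1 : Fin (m + 1)) : ℕ) = F r + 1 := by
      rw [Fin.val_add_one, if_neg hne, h1]
    have h := hpat ⟨r + 1, hr⟩ ⟨r, hrm⟩ rfl
    rw [hval, ← h2] at h
    omega
  obtain ⟨s, hs, I, hI0, hIs, hImono, hIblk⟩ :=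
    aux_run_blocks (m + 1) F hFlt hFinj hFsurj hFstep (m + 1) 0 (by omega) (by omega)
      (by
        intro i hin
        constructor
        · omega
        · intro h
          have := hFlt i hin
          omega)
  have hzero : I (1 - 1) = 0 := hI0
  have hI1 : I 1 < m + 1 := by
    rcases Nat.lt_or_ge s 2 with hs2 | hs2
    · -- s = 1 : w would be the identity
      have hs1 : s = 1 := by omega
      subst hs1
      exfalso
      apply hw
      ext i
      have hblk := hIblk 1 le_rfl le_rfl (i : ℕ)
        (le_of_eq_of_le hzero (Nat.zero_le _)) (by rw [hIs]; exact i.isLt)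
      rw [hFval i, hzero, hIs] at hblk
      have hvi : ((w i : Fin (m + 1)) : ℕ) = (i : ℕ) := by omega
      simpa using hvi
    · have := hImono 1 s (by omega) le_rfl
      omega
  refine ⟨s, hs, I, hI0, hIs, hImono, hI1, ?_⟩
  intro j hj1 hj2 i hi1 hi2
  have := hIblk j hj1 hj2 (i : ℕ) hi1 hi2
  rwa [hFval i] at this
end

section
/- Let R be a perfect ring of characteristic p and let x, y : Spec R → X be two morphisms to a separated scheme X that agree after composition with Spec K_p → Spec R for every point p of Spec R and some choice of algebraically closed field K_p with image p. Then x = y. -/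
open AlgebraicGeometry CategoryTheory Limits

lemma isReduced_of_frobenius_injective (p : ℕ) (hp : 1 < p) (R : Type) [CommRing R]
    (hinj : Function.Injective (fun a : R => a ^ p)) : IsReduced R := by
  constructor
  intro a ha
  obtain ⟨n, hn⟩ := ha
  have key : ∀ k (b : R), b ^ p ^ k = 0 → b = 0 := by
    intro k
    induction k with
    | zero => intro b h; simpa using h
    | succ k ih =>
      intro b h
      refine ih b (hinj ?_)
      show (b ^ p ^ k) ^ p = 0 ^ p
      rw [← pow_mul, ← pow_succ, h, zero_pow (Nat.lt_of_lt_of_le Nat.zero_lt_one hp.le).ne']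
  refine key n a ?_
  have hle : n ≤ p ^ n := (Nat.lt_pow_self (n := n) hp).le
  calc a ^ p ^ n = a ^ n * a ^ (p ^ n - n) := by rw [← pow_add, Nat.add_sub_cancel' hle]
    _ = 0 := by rw [hn, zero_mul]

/-- Let `R` be a perfect ring of characteristic `p` and `x, y : Spec R ⟶ X` two
morphisms to a separated scheme `X`.  If for every point `pt` of `Spec R` there is
an algebraically closed field `K` and a morphism `Spec K ⟶ Spec R` hitting `pt`
after composition with which `x` and `y` agree, then `x = y`. -/
theorem morphisms_eq_of_eq_on_field_points
    (p : ℕ) [Fact p.Prime] (R : Type) [CommRing R] [CharP R p]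
    (hperf : Function.Bijective (fun a : R => a ^ p))
    (X : Scheme) [X.IsSeparated]
    (x y : Spec (CommRingCat.of R) ⟶ X)
    (hpts : ∀ pt : ↥(Spec (CommRingCat.of R)),
      ∃ (K : Type) (_ : Field K) (_ : IsAlgClosed K)
        (f : Spec (CommRingCat.of K) ⟶ Spec (CommRingCat.of R)),
        (∀ z, f.base z = pt) ∧ f ≫ x = f ≫ y) :
    x = y := by
  have hred : IsReduced R :=
    isReduced_of_frobenius_injective p (Fact.out : p.Prime).one_lt R hperf.1
  have : IsReduced (CommRingCat.of R) := hred
  have : IsReduced (Spec (CommRingCat.of R)) := inferInstance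
  have hsurj : AlgebraicGeometry.Surjective (equalizer.ι x y) := by
    constructor
    intro pt
    obtain ⟨K, _, _, f, hf, hfeq⟩ := hpts pt
    obtain ⟨z⟩ : Nonempty (Spec (CommRingCat.of K)) :=
      inferInstanceAs (Nonempty (PrimeSpectrum K))
    refine ⟨(equalizer.lift f hfeq).base z, ?_⟩
    rw [← Scheme.Hom.comp_apply, equalizer.lift_ι]
    exact hf z
  exact ext_of_isDominant (equalizer.ι x y) (equalizer.condition x y)
end
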